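/- arXiv:2305.15598 — 6 statements merged into one kernel-verified Lean document; each statement's English description precedes it below -/
import Mathlib

section
/- Let L ≥ 2 be an integer, q = 2/(L-1), let a ∈ ℝ^K have all entries nonzero, and let W ∈ ℝ^{K×d}. Then the infimum over vectors λ ∈ ℝ^K with all entries positive of (1/L)‖D_λ a‖₂² + ((L-1)/L)‖D_λ^{-1} W‖_{S^q}^q equals Φ_L(D_a W), where D_a is the diagonal matrix with diagonal entries a. -/
open Matrix

/-- The singular values of a real `K × d` matrix `M`, given (in some order, with
multiplicity, padded with zeros up to `d` values) as the square roots of the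
eigenvalues of `Mᴴ M`. -/
noncomputable def matSingVal {K d : ℕ} (M : Matrix (Fin K) (Fin d) ℝ) (j : Fin d) : ℝ :=
  Real.sqrt ((Matrix.isHermitian_conjTranspose_mul_self M).eigenvalues j)

/-- `‖M‖_{S^q}^q = Σ_k σ_k(M)^q`, the `q`-th power of the Schatten-`q` quasi-norm. -/
noncomputable def schattenPow {K d : ℕ} (M : Matrix (Fin K) (Fin d) ℝ) (q : ℝ) : ℝ :=
  ∑ j, matSingVal M j ^ q

/-- The Schatten-`q` quasi-norm `‖M‖_{S^q} = (Σ_k σ_k(M)^q)^{1/q}`. -/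
noncomputable def schattenNorm {K d : ℕ} (M : Matrix (Fin K) (Fin d) ℝ) (q : ℝ) : ℝ :=
  schattenPow M q ^ (1 / q)

/-- `Φ_L(M) = inf { ‖D_λ⁻¹ M‖_{S^{2/(L-1)}}^{2/L} : λ ∈ ℝ^K, λ > 0, ‖λ‖₂ = 1 }`. -/
noncomputable def Phi (L : ℕ) {K d : ℕ} (M : Matrix (Fin K) (Fin d) ℝ) : ℝ :=
  sInf { r | ∃ l : Fin K → ℝ, (∀ k, 0 < l k) ∧ (∑ k, l k ^ 2) = 1 ∧
    r = schattenNorm (Matrix.diagonal (fun k => (l k)⁻¹) * M) (2 / ((L : ℝ) - 1)) ^ ((2 : ℝ) / L) }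


section AuxEig
open Polynomial
variable {n : ℕ}

lemma charpoly_conj (P B Q : Matrix (Fin n) (Fin n) ℝ) (h : P * Q = 1) :
    (P * B * Q).charpoly = B.charpoly := by
  have hPC : (P.map (C : ℝ →+* ℝ[X])) * (Q.map C) = 1 := by
    rw [← Matrix.map_mul, h, Matrix.map_one _ (map_zero _) (map_one _)]
  have key : charmatrix (P * B * Q) = (P.map C) * charmatrix B * (Q.map C) := by
    unfold charmatrix
    simp only [RingHom.mapMatrix_apply]
    rw [mul_sub, sub_mul, ← Matrix.map_mul, ← Matrix.map_mul]
    congr 1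
    rw [← (scalar_commute (X : ℝ[X]) (Commute.all _) (P.map C)).eq, mul_assoc, hPC, mul_one]
  rw [Matrix.charpoly, key, det_mul, det_mul, mul_comm, ← mul_assoc, ← det_mul,
    mul_eq_one_comm.mp hPC, det_one, one_mul, Matrix.charpoly]

lemma charpoly_hermitian (A : Matrix (Fin n) (Fin n) ℝ) (hA : A.IsHermitian) :
    A.charpoly = ∏ i, (X - C (hA.eigenvalues i)) := by
  have hs := hA.spectral_theorem
  have hU : (hA.eigenvectorUnitary : Matrix (Fin n) (Fin n) ℝ) *
      (star hA.eigenvectorUnitary : Matrix (Fin n) (Fin n) ℝ) = 1 := by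
    simpa using hA.eigenvectorUnitary.2.2
  calc A.charpoly
      = (Matrix.diagonal (RCLike.ofReal ∘ hA.eigenvalues) : Matrix (Fin n) (Fin n) ℝ).charpoly := by
        conv_lhs => rw [hs]
        exact charpoly_conj _ _ _ hU
    _ = ∏ i, (X - C (hA.eigenvalues i)) := by
        rw [Matrix.charpoly, charmatrix, RingHom.mapMatrix_apply, scalar_apply,
          Matrix.diagonal_map (map_zero _), diagonal_sub, det_diagonal]
        simp [Function.comp]

lemma sum_eq_of_prod_X_sub_C_eq (f g : Fin n → ℝ)
    (h : ∏ i, (X - C (f i)) = ∏ i, (X - C (g i))) (φ : ℝ → ℝ) :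
    ∑ i, φ (f i) = ∑ i, φ (g i) := by
  have hm : (Finset.univ.val.map f) = (Finset.univ.val.map g) := by
    have h1 : ((Finset.univ.val.map f).map fun a => X - C a).prod
        = ((Finset.univ.val.map g).map fun a => X - C a).prod := by
      simpa [Multiset.map_map, Finset.prod, Function.comp_def] using h
    have := congrArg Polynomial.roots h1
    rwa [roots_multiset_prod_X_sub_C, roots_multiset_prod_X_sub_C] at this
  calc ∑ i, φ (f i) = ((Finset.univ.val.map f).map φ).sum := by
        rw [Multiset.map_map]; rfl
    _ = ((Finset.univ.val.map g).map φ).sum := by rw [hm]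
    _ = ∑ i, φ (g i) := by rw [Multiset.map_map]; rfl

lemma eig_congr {A B : Matrix (Fin n) (Fin n) ℝ} (h : A = B) (hA : A.IsHermitian)
    (hB : B.IsHermitian) : hA.eigenvalues = hB.eigenvalues := by
  subst h; rfl

lemma eigs_sum_smul (c : ℝ) (G : Matrix (Fin n) (Fin n) ℝ) (hG : G.IsHermitian)
    (hcG : (c • G).IsHermitian) (φ : ℝ → ℝ) :
    ∑ j, φ (hcG.eigenvalues j) = ∑ j, φ (c * hG.eigenvalues j) := by
  have hU : (hG.eigenvectorUnitary : Matrix (Fin n) (Fin n) ℝ) *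
      (star hG.eigenvectorUnitary : Matrix (Fin n) (Fin n) ℝ) = 1 := by
    simpa using hG.eigenvectorUnitary.2.2
  have hs : c • G = (hG.eigenvectorUnitary : Matrix (Fin n) (Fin n) ℝ) *
      Matrix.diagonal (fun i => c * hG.eigenvalues i) *
      (star hG.eigenvectorUnitary : Matrix (Fin n) (Fin n) ℝ) := by
    conv_lhs => rw [hG.spectral_theorem]
    have hv : (fun i => c * hG.eigenvalues i) = c • (RCLike.ofReal ∘ hG.eigenvalues : Fin n → ℝ) := by
      ext i; simp
    rw [hv, diagonal_smul, mul_smul_comm, smul_mul_assoc]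
    rfl
  have h1 : (c • G).charpoly = ∏ i, (X - C (hcG.eigenvalues i)) := charpoly_hermitian _ hcG
  have h2 : (c • G).charpoly = ∏ i, (X - C (c * hG.eigenvalues i)) := by
    rw [hs, charpoly_conj _ _ _ hU, Matrix.charpoly, charmatrix, RingHom.mapMatrix_apply,
      scalar_apply, Matrix.diagonal_map (map_zero _), diagonal_sub, det_diagonal]
  exact sum_eq_of_prod_X_sub_C_eq _ _ (h1.symm.trans h2) φ

end AuxEig

section AuxSchatten

lemma schattenPow_nonneg (M : Matrix (Fin K) (Fin d) ℝ) (q : ℝ) : 0 ≤ schattenPow M q :=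
  Finset.sum_nonneg fun j _ => Real.rpow_nonneg (Real.sqrt_nonneg _) _

lemma schattenPow_of_zero (M : Matrix (Fin K) (Fin d) ℝ) (hM : M = 0) (q : ℝ) (hq : q ≠ 0) :
    schattenPow M q = 0 := by
  have hZ : Mᴴ * M = (0 : Matrix (Fin d) (Fin d) ℝ) := by rw [hM]; simp
  have h0 : (0 : Matrix (Fin d) (Fin d) ℝ).IsHermitian := hZ ▸ isHermitian_conjTranspose_mul_self M
  unfold schattenPow matSingVal
  rw [eig_congr hZ (isHermitian_conjTranspose_mul_self M) h0]
  have h1 : ∀ j, h0.eigenvalues j = 0 := fun j => by rw [h0.eigenvalues_eq]; simp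
  simp [h1, Real.zero_rpow hq]

lemma schattenPow_smul_sign (s : ℝ) (hs : 0 ≤ s) (ε : Fin K → ℝ) (hε : ∀ k, ε k * ε k = 1)
    (Y : Matrix (Fin K) (Fin d) ℝ) (q : ℝ) :
    schattenPow (s • (Matrix.diagonal ε * Y)) q = s ^ q * schattenPow Y q := by
  set Z := s • (Matrix.diagonal ε * Y) with hZdef
  have hZ : Zᴴ * Z = (s ^ 2 : ℝ) • (Yᴴ * Y) := by
    have hstar : star ε = ε := by ext k; simp
    have hss : star s = s := by simp
    rw [hZdef, conjTranspose_smul, Matrix.conjTranspose_mul, diagonal_conjTranspose, hstar, hss]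
    rw [Matrix.smul_mul, Matrix.mul_smul, smul_smul, Matrix.mul_assoc,
      ← Matrix.mul_assoc (Matrix.diagonal ε) (Matrix.diagonal ε) Y, diagonal_mul_diagonal]
    have h1 : Matrix.diagonal (fun i => ε i * ε i) = (1 : Matrix (Fin K) (Fin K) ℝ) := by
      have : (fun i => ε i * ε i) = fun _ => (1:ℝ) := funext hε
      rw [this, diagonal_one]
    rw [h1, Matrix.one_mul, sq]
  have hsm : ((s ^ 2 : ℝ) • (Yᴴ * Y)).IsHermitian := hZ ▸ isHermitian_conjTranspose_mul_self Z
  unfold schattenPow matSingVal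
  rw [eig_congr hZ (isHermitian_conjTranspose_mul_self Z) hsm]
  rw [eigs_sum_smul (s ^ 2) (Yᴴ * Y) (isHermitian_conjTranspose_mul_self Y) hsm
    (fun x => Real.sqrt x ^ q)]
  rw [Finset.mul_sum]
  refine Finset.sum_congr rfl fun j _ => ?_
  have he : 0 ≤ (isHermitian_conjTranspose_mul_self Y).eigenvalues j :=
    (Matrix.posSemidef_conjTranspose_mul_self Y).eigenvalues_nonneg j
  rw [Real.sqrt_mul (sq_nonneg s), Real.sqrt_sq hs, Real.mul_rpow hs (Real.sqrt_nonneg _)]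

lemma diag_mul_diag_mul (v u : Fin K → ℝ) (X : Matrix (Fin K) (Fin d) ℝ) :
    Matrix.diagonal v * (Matrix.diagonal u * X) = Matrix.diagonal (fun k => v k * u k) * X := by
  rw [← Matrix.mul_assoc, diagonal_mul_diagonal]

lemma smul_diag_mul (s : ℝ) (v : Fin K → ℝ) (X : Matrix (Fin K) (Fin d) ℝ) :
    s • (Matrix.diagonal v * X) = Matrix.diagonal (fun k => s * v k) * X := by
  rw [← Matrix.smul_mul, ← diagonal_smul]
  rfl

end AuxSchatten

/-- the infimum over positive rescalings `λ` of
`(1/L)‖D_λ a‖₂² + ((L-1)/L)‖D_λ⁻¹ W‖_{S^q}^q` equals `Φ_L(D_a W)`. -/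
theorem inf_rescaled_cost_eq_Phi {K d : ℕ} (L : ℕ) (hL : 2 ≤ L)
    (a : Fin K → ℝ) (ha : ∀ k, a k ≠ 0) (W : Matrix (Fin K) (Fin d) ℝ) :
    sInf { r | ∃ l : Fin K → ℝ, (∀ k, 0 < l k) ∧
        r = (1 / (L : ℝ)) * (∑ k, (l k * a k) ^ 2) +
          (((L : ℝ) - 1) / L) *
            schattenPow (Matrix.diagonal (fun k => (l k)⁻¹) * W) (2 / ((L : ℝ) - 1)) } =
      Phi L (Matrix.diagonal a * W) := by
  have hL2 : (2:ℝ) ≤ (L:ℝ) := by exact_mod_cast hL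
  have hL0 : (0:ℝ) < (L:ℝ) := by linarith
  have hL1 : (0:ℝ) < (L:ℝ) - 1 := by linarith
  have hq : 0 < 2 / ((L:ℝ) - 1) := by positivity
  unfold Phi
  rcases Nat.eq_zero_or_pos K with hK | hK
  · subst hK
    have hzero : ∀ l : Fin 0 → ℝ, (Matrix.diagonal (fun k => (l k)⁻¹) * W) = 0 := by
      intro l; ext i j; exact i.elim0
    have hS : { r | ∃ l : Fin 0 → ℝ, (∀ k, 0 < l k) ∧
        r = (1 / (L : ℝ)) * (∑ k, (l k * a k) ^ 2) +
          (((L : ℝ) - 1) / L) *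
            schattenPow (Matrix.diagonal (fun k => (l k)⁻¹) * W) (2 / ((L : ℝ) - 1)) } = {0} := by
      ext r
      simp only [Set.mem_setOf_eq, Set.mem_singleton_iff]
      constructor
      · rintro ⟨l, hl, rfl⟩
        rw [schattenPow_of_zero _ (hzero l) _ (ne_of_gt hq)]
        simp
      · rintro rfl
        refine ⟨fun _ => 1, fun k => k.elim0, ?_⟩
        rw [schattenPow_of_zero _ (hzero _) _ (ne_of_gt hq)]
        simp
    have hT : { r | ∃ l : Fin 0 → ℝ, (∀ k, 0 < l k) ∧ (∑ k, l k ^ 2) = 1 ∧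
        r = schattenNorm (Matrix.diagonal (fun k => (l k)⁻¹) * (Matrix.diagonal a * W))
          (2 / ((L : ℝ) - 1)) ^ ((2 : ℝ) / L) } = ∅ := by
      ext r
      simp only [Set.mem_setOf_eq, Set.mem_empty_iff_false, iff_false, not_exists]
      rintro l ⟨-, hnorm, -⟩
      simp at hnorm
    rw [hS, hT, csInf_singleton, Real.sInf_empty]
  · haveI : Nonempty (Fin K) := ⟨⟨0, hK⟩⟩
    set q : ℝ := 2 / ((L:ℝ) - 1) with hqdef
    set M : Matrix (Fin K) (Fin d) ℝ := Matrix.diagonal a * W with hMdef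
    set eL : ℝ := ((L:ℝ) - 1) / L with heLdef
    have heL : 0 < eL := by positivity
    set ε : Fin K → ℝ := fun k => a k / |a k| with hεdef
    have hε : ∀ k, ε k * ε k = 1 := by
      intro k
      rw [hεdef, div_mul_div_comm, abs_mul_abs_self]
      exact div_self (mul_ne_zero (ha k) (ha k))
    -- value conversion for elements of the Phi set
    have hTval : ∀ μ : Fin K → ℝ,
        schattenNorm (Matrix.diagonal (fun k => (μ k)⁻¹) * M) q ^ ((2:ℝ)/L)
          = (schattenPow (Matrix.diagonal (fun k => (μ k)⁻¹) * M) q) ^ eL := by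
      intro μ
      unfold schattenNorm
      rw [← Real.rpow_mul (schattenPow_nonneg _ _)]
      congr 1
      rw [hqdef, heLdef]
      field_simp
    set S := { r | ∃ l : Fin K → ℝ, (∀ k, 0 < l k) ∧
        r = (1 / (L : ℝ)) * (∑ k, (l k * a k) ^ 2) + eL * schattenPow
          (Matrix.diagonal (fun k => (l k)⁻¹) * W) q } with hSdef
    set T := { r | ∃ l : Fin K → ℝ, (∀ k, 0 < l k) ∧ (∑ k, l k ^ 2) = 1 ∧
        r = schattenNorm (Matrix.diagonal (fun k => (l k)⁻¹) * M) q ^ ((2:ℝ)/L) } with hTdef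
    show sInf S = sInf T
    have hSbdd : BddBelow S := by
      refine ⟨0, ?_⟩
      rintro r ⟨l, hl, rfl⟩
      have h1 := schattenPow_nonneg (Matrix.diagonal (fun k => (l k)⁻¹) * W) q
      have h2 : (0:ℝ) ≤ ∑ k, (l k * a k) ^ 2 :=
        Finset.sum_nonneg fun k _ => sq_nonneg _
      positivity
    have hTbdd : BddBelow T := by
      refine ⟨0, ?_⟩
      rintro r ⟨l, hl, -, rfl⟩
      exact Real.rpow_nonneg (Real.rpow_nonneg (schattenPow_nonneg _ _) _) _
    have hSne : S.Nonempty := ⟨_, fun _ => (1:ℝ), fun _ => one_pos, rfl⟩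
    have hTne : T.Nonempty := by
      have hKpos : (0:ℝ) < (K:ℝ) := by exact_mod_cast hK
      refine ⟨_, fun _ => (Real.sqrt K)⁻¹,
        fun _ => inv_pos.mpr (Real.sqrt_pos.mpr hKpos), ?_, rfl⟩
      rw [Finset.sum_const, Finset.card_univ, Fintype.card_fin, nsmul_eq_mul,
        inv_pow, Real.sq_sqrt hKpos.le]
      exact mul_inv_cancel₀ (ne_of_gt hKpos)
    refine le_antisymm (le_csInf hTne ?_) (le_csInf hSne ?_)
    · -- sInf S ≤ every element of T
      rintro v ⟨μ, hμpos, hμnorm, rfl⟩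
      rw [hTval μ]
      set Bμ := schattenPow (Matrix.diagonal (fun k => (μ k)⁻¹) * M) q with hBdef
      have hBμ0 : 0 ≤ Bμ := schattenPow_nonneg _ _
      have hgen : ∀ t : ℝ, 0 < t →
          ((1/(L:ℝ)) * t^2 + eL * ((t⁻¹) ^ q * Bμ)) ∈ S := by
        intro t ht
        refine ⟨fun k => t * μ k / |a k|, fun k =>
          div_pos (mul_pos ht (hμpos k)) (abs_pos.mpr (ha k)), ?_⟩
        have hsum : ∑ k, (t * μ k / |a k| * a k) ^ 2 = t ^ 2 := by
          have hterm : ∀ k : Fin K, (t * μ k / |a k| * a k) ^ 2 = t ^ 2 * μ k ^ 2 := by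
            intro k
            have hak : |a k| ≠ 0 := abs_ne_zero.mpr (ha k)
            rw [div_mul_eq_mul_div, div_pow, mul_pow, mul_pow, sq_abs]
            rw [mul_div_assoc, div_self (pow_ne_zero 2 (ha k)), mul_one]
          rw [Finset.sum_congr rfl fun k _ => hterm k, ← Finset.mul_sum, hμnorm, mul_one]
        have hmat2 : Matrix.diagonal (fun k => (t * μ k / |a k|)⁻¹) * W
            = t⁻¹ • (Matrix.diagonal ε * (Matrix.diagonal (fun k => (μ k)⁻¹) * M)) := by
          rw [hMdef, diag_mul_diag_mul, diag_mul_diag_mul, smul_diag_mul]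
          have hvec : (fun k => (t * μ k / |a k|)⁻¹)
              = (fun k => t⁻¹ * (ε k * (μ k)⁻¹ * a k)) := by
            funext k
            have hak : |a k| ≠ 0 := abs_ne_zero.mpr (ha k)
            have hμk : μ k ≠ 0 := ne_of_gt (hμpos k)
            rw [hεdef]
            field_simp
            linear_combination abs_mul_abs_self (a k)
          rw [hvec]
        rw [hsum, hmat2, schattenPow_smul_sign t⁻¹ (inv_nonneg.mpr ht.le) ε hε _ q, ← hBdef]
      rcases eq_or_lt_of_le hBμ0 with hB | hB
      · rw [← hB, Real.zero_rpow (ne_of_gt heL)]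
        refine le_of_forall_pos_le_add ?_
        intro δ hδ
        have hmem := hgen (Real.sqrt δ) (Real.sqrt_pos.mpr hδ)
        rw [← hB, mul_zero, mul_zero, add_zero, Real.sq_sqrt hδ.le] at hmem
        calc sInf S ≤ 1/(L:ℝ) * δ := csInf_le hSbdd hmem
          _ ≤ 0 + δ := by
              rw [zero_add]
              have h1 : 1/(L:ℝ) ≤ 1 := by rw [div_le_one hL0]; linarith
              nlinarith
      · set t : ℝ := Bμ ^ (((L:ℝ) - 1)/(2*L)) with htdef
        have ht : 0 < t := Real.rpow_pos_of_pos hB _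
        have hmem := hgen t ht
        have ht2 : t ^ 2 = Bμ ^ eL := by
          rw [htdef, ← Real.rpow_natCast (Bμ ^ (((L:ℝ) - 1)/(2*L))) 2,
            ← Real.rpow_mul hBμ0, heLdef]
          congr 1
          push_cast
          field_simp
        have htq : (t⁻¹) ^ q * Bμ = Bμ ^ eL := by
          rw [htdef, ← Real.rpow_neg_one (Bμ ^ (((L:ℝ) - 1)/(2*L))), ← Real.rpow_mul hBμ0,
            ← Real.rpow_mul hBμ0]
          nth_rewrite 2 [← Real.rpow_one Bμ]
          rw [← Real.rpow_add hB, heLdef, hqdef]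
          congr 1
          field_simp
          ring
        rw [ht2, htq, ← add_mul] at hmem
        have hcoef : 1/(L:ℝ) + eL = 1 := by
          rw [heLdef]; field_simp; ring
        rw [hcoef, one_mul] at hmem
        exact csInf_le hSbdd hmem
    · -- sInf T ≤ every element of S
      rintro r ⟨l, hl, rfl⟩
      set A := ∑ k, (l k * a k) ^ 2 with hAdef
      have hA : 0 < A := Finset.sum_pos
        (fun k _ => pow_two_pos_of_ne_zero (mul_ne_zero (ne_of_gt (hl k)) (ha k)))
        Finset.univ_nonempty
      set s : ℝ := Real.sqrt A with hsdef
      have hs : 0 < s := Real.sqrt_pos.mpr hA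
      have hs2 : s ^ 2 = A := Real.sq_sqrt hA.le
      set μ : Fin K → ℝ := fun k => l k * |a k| / s with hμdef
      have hμpos : ∀ k, 0 < μ k := fun k =>
        div_pos (mul_pos (hl k) (abs_pos.mpr (ha k))) hs
      have hμnorm : ∑ k, μ k ^ 2 = 1 := by
        have hterm : ∀ k : Fin K, μ k ^ 2 = (l k * a k) ^ 2 / s ^ 2 := by
          intro k
          rw [hμdef, div_pow, mul_pow, mul_pow, sq_abs]
        rw [Finset.sum_congr rfl fun k _ => hterm k, ← Finset.sum_div, hs2, ← hAdef,
          div_self (ne_of_gt hA)]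
      have hmat : Matrix.diagonal (fun k => (μ k)⁻¹) * M
          = s • (Matrix.diagonal ε * (Matrix.diagonal (fun k => (l k)⁻¹) * W)) := by
        rw [hMdef, diag_mul_diag_mul, diag_mul_diag_mul, smul_diag_mul]
        have hvec : (fun k => (μ k)⁻¹ * a k)
            = (fun k => s * (ε k * (l k)⁻¹)) := by
          funext k
          have hak : |a k| ≠ 0 := abs_ne_zero.mpr (ha k)
          have hlk : l k ≠ 0 := ne_of_gt (hl k)
          rw [hμdef, hεdef]
          field_simp
        rw [hvec]
      set B₀ := schattenPow (Matrix.diagonal (fun k => (l k)⁻¹) * W) q with hB₀def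
      have hB₀ : 0 ≤ B₀ := schattenPow_nonneg _ _
      have hBrel : schattenPow (Matrix.diagonal (fun k => (μ k)⁻¹) * M) q = s ^ q * B₀ := by
        rw [hmat, schattenPow_smul_sign s hs.le ε hε _ q, hB₀def]
      have hmemT : schattenNorm (Matrix.diagonal (fun k => (μ k)⁻¹) * M) q ^ ((2:ℝ)/L) ∈ T :=
        ⟨μ, hμpos, hμnorm, rfl⟩
      refine le_trans (csInf_le hTbdd hmemT) ?_
      rw [hTval μ, hBrel]
      have hsplit : (s ^ q * B₀) ^ eL = (s ^ 2) ^ ((1:ℝ)/L) * B₀ ^ eL := by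
        rw [Real.mul_rpow (Real.rpow_nonneg hs.le _) hB₀,
          ← Real.rpow_mul hs.le, ← Real.rpow_natCast s 2, ← Real.rpow_mul hs.le]
        congr 2
        rw [hqdef, heLdef]
        push_cast
        field_simp
      rw [hsplit]
      have hgm := Real.geom_mean_le_arith_mean2_weighted
        (by positivity : (0:ℝ) ≤ 1/(L:ℝ)) heL.le (by positivity : (0:ℝ) ≤ s ^ 2) hB₀
        (by rw [heLdef]; field_simp; ring : 1/(L:ℝ) + eL = 1)
      calc (s ^ 2 : ℝ) ^ ((1:ℝ)/L) * B₀ ^ eL ≤ 1/(L:ℝ) * s ^ 2 + eL * B₀ := hgm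
        _ = (1 / (L : ℝ)) * A + eL * B₀ := by rw [hs2]
end

section
/- For every integer L ≥ 2 and every matrix M ∈ ℝ^{K×d}, Φ_2(M)^{2/L} ≤ Φ_L(M) ≤ rank(M)^{(L-2)/L} · Φ_2(M)^{2/L}. -/
open Matrix

lemma aux_sum_pow_le_pow_sum {ι : Type*} (s : Finset ι) (f : ι → ℝ)
    (hf : ∀ i ∈ s, 0 ≤ f i) {n : ℕ} (hn : n ≠ 0) :
    ∑ i ∈ s, f i ^ n ≤ (∑ i ∈ s, f i) ^ n := by
  induction s using Finset.cons_induction with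
  | empty => simp [zero_pow hn]
  | cons a s ha ih =>
    simp only [Finset.sum_cons]
    have h0 : 0 ≤ f a := hf a (Finset.mem_cons_self a s)
    have h1 : ∀ i ∈ s, 0 ≤ f i := fun i hi => hf i (Finset.mem_cons_of_mem hi)
    calc f a ^ n + ∑ i ∈ s, f i ^ n ≤ f a ^ n + (∑ i ∈ s, f i) ^ n := by
          gcongr; exact ih h1
      _ ≤ (f a + ∑ i ∈ s, f i) ^ n :=
          pow_add_pow_le h0 (Finset.sum_nonneg h1) hn

lemma aux_rank_eq {K d : ℕ} (M : Matrix (Fin K) (Fin d) ℝ) (l : Fin K → ℝ)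
    (hl : ∀ k, 0 < l k) :
    (Matrix.diagonal (fun k => (l k)⁻¹) * M).rank = M.rank := by
  apply Matrix.rank_mul_eq_right_of_isUnit_det
  rw [Matrix.det_diagonal]
  exact isUnit_iff_ne_zero.mpr (Finset.prod_ne_zero_iff.mpr
    fun k _ => inv_ne_zero (hl k).ne')

lemma key {K d : ℕ} (L : ℕ) (hL : 2 ≤ L) (M : Matrix (Fin K) (Fin d) ℝ)
    (l : Fin K → ℝ) (hl : ∀ k, 0 < l k) :
    schattenNorm (Matrix.diagonal (fun k => (l k)⁻¹) * M) 2 ^ ((2:ℝ)/L) ≤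
      schattenNorm (Matrix.diagonal (fun k => (l k)⁻¹) * M) (2 / ((L:ℝ)-1)) ^ ((2:ℝ)/L) ∧
    schattenNorm (Matrix.diagonal (fun k => (l k)⁻¹) * M) (2 / ((L:ℝ)-1)) ^ ((2:ℝ)/L) ≤
      (M.rank : ℝ) ^ (((L:ℝ)-2)/L) *
        schattenNorm (Matrix.diagonal (fun k => (l k)⁻¹) * M) 2 ^ ((2:ℝ)/L) := by
  classical
  set A := Matrix.diagonal (fun k => (l k)⁻¹) * M with hA
  set σ : Fin d → ℝ := matSingVal A with hσdef
  have hσ : ∀ j, 0 ≤ σ j := fun j => Real.sqrt_nonneg _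
  set n : ℕ := L - 1 with hndef
  have hn1 : 1 ≤ n := by omega
  have hnne : n ≠ 0 := by omega
  have hncast : (n : ℝ) = (L : ℝ) - 1 := by
    rw [hndef]; push_cast [Nat.cast_sub (by omega : 1 ≤ L)]; ring
  have hnpos : (0:ℝ) < n := by positivity
  have hLpos : (0:ℝ) < L := by positivity
  set q : ℝ := 2 / ((L:ℝ) - 1) with hqdef
  have hq : q = 2 / (n:ℝ) := by rw [hqdef, hncast]
  have hqpos : 0 < q := by rw [hq]; positivity
  set X : ℝ := schattenPow A q with hXdef
  set P : ℝ := schattenPow A 2 with hPdef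
  have hX0 : 0 ≤ X := Finset.sum_nonneg fun j _ => Real.rpow_nonneg (hσ j) _
  have hP0 : 0 ≤ P := Finset.sum_nonneg fun j _ => Real.rpow_nonneg (hσ j) _
  have hpt : ∀ j, (σ j ^ q) ^ ((n:ℝ)) = σ j ^ (2:ℝ) := by
    intro j
    rw [← Real.rpow_mul (hσ j)]
    congr 1
    rw [hq]
    have hnne' : (n:ℝ) ≠ 0 := hnpos.ne'
    field_simp
  -- lower bound on X^n
  have h1 : P ≤ X ^ ((n:ℝ)) := by
    have hcalc : P = ∑ j, (σ j ^ q) ^ n := by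
      rw [hPdef, schattenPow]
      refine Finset.sum_congr rfl fun j _ => ?_
      show σ j ^ (2:ℝ) = _
      rw [← hpt j, Real.rpow_natCast]
    rw [hcalc, Real.rpow_natCast]
    exact aux_sum_pow_le_pow_sum _ _ (fun j _ => Real.rpow_nonneg (hσ j) q) hnne
  -- support set
  set s : Finset (Fin d) := Finset.univ.filter (fun j => σ j ≠ 0) with hsdef
  have hXs : X = ∑ j ∈ s, σ j ^ q := by
    rw [hXdef, schattenPow]
    refine (Finset.sum_subset (Finset.subset_univ s) fun j _ hj => ?_).symm
    have : σ j = 0 := by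
      by_contra h
      exact hj (Finset.mem_filter.mpr ⟨Finset.mem_univ j, h⟩)
    show σ j ^ q = 0
    rw [this, Real.zero_rpow hqpos.ne']
  have hcard : (s.card : ℕ) = M.rank := by
    have h2 : (Aᴴ * A).rank = A.rank := Matrix.rank_conjTranspose_mul_self A
    have h3 : A.rank = M.rank := aux_rank_eq M l hl
    have h4 := (Matrix.isHermitian_conjTranspose_mul_self A).rank_eq_card_non_zero_eigs
    rw [← h3, ← h2, h4, Fintype.card_subtype]
    congr 1
    refine Finset.filter_congr fun j _ => ?_
    constructor
    · intro h
      intro h0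
      apply h
      rw [hσdef]
      show Real.sqrt _ = 0
      rw [show (Matrix.isHermitian_conjTranspose_mul_self A).eigenvalues j = 0 from h0]
      exact Real.sqrt_zero
    · intro h h0
      apply h
      have hnn := Matrix.eigenvalues_conjTranspose_mul_self_nonneg A j
      have := Real.sqrt_eq_zero'.mp h0
      linarith
  have h2 : X ^ ((n:ℝ)) ≤ (M.rank : ℝ) ^ ((n:ℝ) - 1) * P := by
    have hhold := Real.rpow_sum_le_const_mul_sum_rpow_of_nonneg s
      (f := fun j => σ j ^ q) (by exact_mod_cast hn1 : (1:ℝ) ≤ (n:ℝ))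
      (fun j _ => Real.rpow_nonneg (hσ j) q)
    rw [← hXs] at hhold
    refine hhold.trans ?_
    rw [hcard]
    refine mul_le_mul_of_nonneg_left ?_ (Real.rpow_nonneg (by positivity) _)
    calc ∑ j ∈ s, (σ j ^ q) ^ ((n:ℝ)) = ∑ j ∈ s, σ j ^ (2:ℝ) :=
          Finset.sum_congr rfl fun j _ => hpt j
      _ ≤ ∑ j, σ j ^ (2:ℝ) := Finset.sum_le_sum_of_subset_of_nonneg
          (Finset.subset_univ s) (fun j _ _ => Real.rpow_nonneg (hσ j) _)
      _ = P := rfl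
  -- norm computations
  have hnormq : schattenNorm A q ^ ((2:ℝ)/L) = X ^ ((n:ℝ)/L) := by
    rw [schattenNorm, ← hXdef, ← Real.rpow_mul hX0]
    congr 1
    rw [hq]
    have hnne' : (n:ℝ) ≠ 0 := hnpos.ne'
    field_simp
  have hnorm2 : schattenNorm A 2 ^ ((2:ℝ)/L) = P ^ ((1:ℝ)/L) := by
    rw [schattenNorm, ← hPdef, ← Real.rpow_mul hP0]
    congr 1
    field_simp
  have hXnL : X ^ ((n:ℝ)/L) = (X ^ ((n:ℝ))) ^ ((1:ℝ)/L) := by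
    rw [← Real.rpow_mul hX0, mul_one_div]
  constructor
  · rw [hnormq, hnorm2, hXnL]
    exact Real.rpow_le_rpow hP0 h1 (by positivity)
  · rw [hnormq, hnorm2, hXnL]
    calc (X ^ ((n:ℝ))) ^ ((1:ℝ)/L) ≤ ((M.rank : ℝ) ^ ((n:ℝ) - 1) * P) ^ ((1:ℝ)/L) :=
          Real.rpow_le_rpow (Real.rpow_nonneg hX0 _) h2 (by positivity)
      _ = (M.rank : ℝ) ^ (((L:ℝ)-2)/L) * P ^ ((1:ℝ)/L) := by
          rw [Real.mul_rpow (Real.rpow_nonneg (by positivity) _) hP0,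
            ← Real.rpow_mul (by positivity : (0:ℝ) ≤ (M.rank:ℝ))]
          congr 1
          rw [hncast]
          ring

lemma aux_mem_nonneg {K d : ℕ} (L : ℕ) {M : Matrix (Fin K) (Fin d) ℝ} (r : ℝ)
    (hr : r ∈ { r | ∃ l : Fin K → ℝ, (∀ k, 0 < l k) ∧ (∑ k, l k ^ 2) = 1 ∧
      r = schattenNorm (Matrix.diagonal (fun k => (l k)⁻¹) * M) (2 / ((L : ℝ) - 1)) ^ ((2 : ℝ) / L) }) :
    0 ≤ r := by
  obtain ⟨l, -, -, rfl⟩ := hr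
  exact Real.rpow_nonneg (Real.rpow_nonneg (Finset.sum_nonneg fun j _ =>
    Real.rpow_nonneg (Real.sqrt_nonneg _) _) _) _

/-- `Φ_2(M)^{2/L} ≤ Φ_L(M) ≤ rank(M)^{(L-2)/L} · Φ_2(M)^{2/L}`. -/
theorem Phi_sandwich {K d : ℕ} (L : ℕ) (hL : 2 ≤ L) (M : Matrix (Fin K) (Fin d) ℝ) :
    Phi 2 M ^ ((2 : ℝ) / L) ≤ Phi L M ∧
      Phi L M ≤ (M.rank : ℝ) ^ (((L : ℝ) - 2) / L) * Phi 2 M ^ ((2 : ℝ) / L) := by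
  classical
  have hLpos : (0:ℝ) < L := by positivity
  set SL := { r | ∃ l : Fin K → ℝ, (∀ k, 0 < l k) ∧ (∑ k, l k ^ 2) = 1 ∧
      r = schattenNorm (Matrix.diagonal (fun k => (l k)⁻¹) * M) (2 / ((L : ℝ) - 1)) ^ ((2 : ℝ) / L) } with hSL
  set S2 := { r | ∃ l : Fin K → ℝ, (∀ k, 0 < l k) ∧ (∑ k, l k ^ 2) = 1 ∧
      r = schattenNorm (Matrix.diagonal (fun k => (l k)⁻¹) * M) (2 / (((2:ℕ) : ℝ) - 1)) ^ ((2 : ℝ) / (2:ℕ)) } with hS2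
  have hPhiL : Phi L M = sInf SL := rfl
  have hPhi2 : Phi 2 M = sInf S2 := rfl
  have hmem2 : ∀ (l : Fin K → ℝ), (∀ k, 0 < l k) → (∑ k, l k ^ 2) = 1 →
      schattenNorm (Matrix.diagonal (fun k => (l k)⁻¹) * M) 2 ∈ S2 := by
    intro l hl hsum
    refine ⟨l, hl, hsum, ?_⟩
    norm_num
  have hbddL : BddBelow SL := ⟨0, fun r hr => aux_mem_nonneg L r hr⟩
  have hbdd2 : BddBelow S2 := ⟨0, fun r hr => aux_mem_nonneg 2 r hr⟩
  rcases Nat.eq_zero_or_pos K with hK | hK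
  · subst hK
    have hemp : ∀ (S : Set ℝ), (S = SL ∨ S = S2) → S = ∅ := by
      intro S hS
      have : ∀ r : ℝ, r ∉ S := by
        intro r hr
        rcases hS with rfl | rfl <;>
        · obtain ⟨l, -, hsum, -⟩ := hr
          simp at hsum
      exact Set.eq_empty_iff_forall_notMem.mpr this
    have h1 : Phi L M = 0 := by rw [hPhiL, hemp SL (Or.inl rfl), Real.sInf_empty]
    have h2 : Phi 2 M = 0 := by rw [hPhi2, hemp S2 (Or.inr rfl), Real.sInf_empty]
    rw [h1, h2, Real.zero_rpow (by positivity : (2:ℝ)/L ≠ 0)]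
    simp
  · -- K > 0 : sets nonempty
    have hKpos : (0:ℝ) < K := by exact_mod_cast hK
    set l0 : Fin K → ℝ := fun _ => Real.sqrt (K:ℝ)⁻¹ with hl0
    have hl0pos : ∀ k, 0 < l0 k := fun k => Real.sqrt_pos.mpr (by positivity)
    have hl0sum : (∑ k, l0 k ^ 2) = 1 := by
      simp [hl0, Real.sq_sqrt (by positivity : (0:ℝ) ≤ (K:ℝ)⁻¹)]
      field_simp
    have hneL : SL.Nonempty := ⟨_, ⟨l0, hl0pos, hl0sum, rfl⟩⟩
    have hne2 : S2.Nonempty := ⟨_, ⟨l0, hl0pos, hl0sum, rfl⟩⟩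
    have hPhi2nn : 0 ≤ Phi 2 M := le_csInf hne2 fun r hr => aux_mem_nonneg 2 r hr
    constructor
    · -- lower bound
      rw [hPhiL]
      refine le_csInf hneL ?_
      rintro r ⟨l, hl, hsum, rfl⟩
      have h1 : Phi 2 M ≤ schattenNorm (Matrix.diagonal (fun k => (l k)⁻¹) * M) 2 :=
        csInf_le hbdd2 (hmem2 l hl hsum)
      calc Phi 2 M ^ ((2:ℝ)/L)
          ≤ schattenNorm (Matrix.diagonal (fun k => (l k)⁻¹) * M) 2 ^ ((2:ℝ)/L) :=
            Real.rpow_le_rpow hPhi2nn h1 (by positivity)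
        _ ≤ _ := (key L hL M l hl).1
    · -- upper bound
      set C : ℝ := (M.rank : ℝ) ^ (((L:ℝ)-2)/L) with hC
      have hC0 : 0 ≤ C := Real.rpow_nonneg (by positivity) _
      set t : ℝ := Phi 2 M with ht
      have hstep : ∀ ε : ℝ, 0 < ε → Phi L M ≤ C * (t + ε) ^ ((2:ℝ)/L) := by
        intro ε hε
        have hlt : sInf S2 < t + ε := by
          rw [← hPhi2]; exact lt_add_of_pos_right _ hε
        obtain ⟨b, hbS, hb⟩ := (csInf_lt_iff hbdd2 hne2).mp hlt
        obtain ⟨l, hl, hsum, rfl⟩ := hbS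
        have hbval : schattenNorm (Matrix.diagonal (fun k => (l k)⁻¹) * M)
            (2 / (((2:ℕ) : ℝ) - 1)) ^ ((2 : ℝ) / (2:ℕ)) =
            schattenNorm (Matrix.diagonal (fun k => (l k)⁻¹) * M) 2 := by norm_num
        rw [hbval] at hb
        have hmemL : schattenNorm (Matrix.diagonal (fun k => (l k)⁻¹) * M)
            (2 / ((L : ℝ) - 1)) ^ ((2 : ℝ) / L) ∈ SL := ⟨l, hl, hsum, rfl⟩
        have hnn : 0 ≤ schattenNorm (Matrix.diagonal (fun k => (l k)⁻¹) * M) 2 :=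
          Real.rpow_nonneg (Finset.sum_nonneg fun j _ =>
            Real.rpow_nonneg (Real.sqrt_nonneg _) _) _
        calc Phi L M ≤ _ := csInf_le hbddL hmemL
          _ ≤ C * schattenNorm (Matrix.diagonal (fun k => (l k)⁻¹) * M) 2 ^ ((2:ℝ)/L) :=
            (key L hL M l hl).2
          _ ≤ C * (t + ε) ^ ((2:ℝ)/L) := by
            refine mul_le_mul_of_nonneg_left ?_ hC0
            exact Real.rpow_le_rpow hnn hb.le (by positivity)
      have htend : Filter.Tendsto (fun ε : ℝ => C * (t + ε) ^ ((2:ℝ)/L))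
          (nhdsWithin 0 (Set.Ioi 0)) (nhds (C * t ^ ((2:ℝ)/L))) := by
        have h1 : Filter.Tendsto (fun ε : ℝ => t + ε) (nhdsWithin 0 (Set.Ioi 0)) (nhds t) := by
          have h0 : Filter.Tendsto (fun ε : ℝ => t + ε) (nhds 0) (nhds (t + 0)) :=
            Filter.tendsto_id.const_add t
          simpa using h0.mono_left nhdsWithin_le_nhds
        have h2 : ContinuousAt (fun x : ℝ => x ^ ((2:ℝ)/L)) t :=
          Real.continuousAt_rpow_const t _ (Or.inr (by positivity))
        exact Filter.Tendsto.const_mul C (h2.tendsto.comp h1)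
      refine ge_of_tendsto htend ?_
      filter_upwards [self_mem_nhdsWithin] with ε hε
      exact hstep ε hε
end

section
/- Let L ≥ 2 be an integer and let σ_1, …, σ_K be nonnegative real numbers, not all zero. Then the infimum, over vectors μ ∈ ℝ^K with all entries positive and ‖μ‖₂ = 1, of Σ_{k=1}^K σ_k^{2/(L-1)} · μ_k^{−2/(L-1)} equals (Σ_{k=1}^K σ_k^{2/L})^{L/(L-1)}. -/
open Finset Real

/-- for nonnegative `σ_1, …, σ_K` not all zero, the infimum over positive
unit vectors `μ` of `Σ_k σ_k^{2/(L-1)} μ_k^{-2/(L-1)}` equals `(Σ_k σ_k^{2/L})^{L/(L-1)}`. -/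
theorem inf_weighted_power_sum {K : ℕ} (L : ℕ) (hL : 2 ≤ L) (σ : Fin K → ℝ)
    (hσ : ∀ k, 0 ≤ σ k) (hne : ∃ k, σ k ≠ 0) :
    sInf { r | ∃ μ : Fin K → ℝ, (∀ k, 0 < μ k) ∧ (∑ k, μ k ^ 2) = 1 ∧
        r = ∑ k, σ k ^ ((2 : ℝ) / ((L : ℝ) - 1)) * μ k ^ (-(2 : ℝ) / ((L : ℝ) - 1)) } =
      (∑ k, σ k ^ ((2 : ℝ) / L)) ^ ((L : ℝ) / ((L : ℝ) - 1)) := by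
  have hL2 : (2:ℝ) ≤ (L:ℝ) := by exact_mod_cast hL
  set c : ℝ := (L : ℝ) - 1 with hc
  have hc1 : (1:ℝ) ≤ c := by rw [hc]; linarith
  have hc0 : (0:ℝ) < c := lt_of_lt_of_le one_pos hc1
  have hcne : c ≠ 0 := ne_of_gt hc0
  have hLpos : (0:ℝ) < (L:ℝ) := by linarith
  have hLne : (L:ℝ) ≠ 0 := ne_of_gt hLpos
  have hcL : c + 1 = (L:ℝ) := by rw [hc]; ring
  set a : Fin K → ℝ := fun k => σ k ^ ((2:ℝ)/L) with ha
  have hanon : ∀ k, 0 ≤ a k := fun k => rpow_nonneg (hσ k) _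
  obtain ⟨k₀, hk₀⟩ := hne
  have hK : 0 < K := k₀.pos
  have hKne : (K:ℝ) ≠ 0 := by positivity
  set A : ℝ := ∑ k, σ k ^ ((2:ℝ)/L) with hA
  have haA : A = ∑ k, a k := rfl
  have hApos : 0 < A := by
    rw [haA]
    exact Finset.sum_pos' (fun k _ => hanon k)
      ⟨k₀, Finset.mem_univ _, rpow_pos_of_pos ((hσ k₀).lt_of_ne (Ne.symm hk₀)) _⟩
  set T : ℝ := A ^ ((L:ℝ)/c) with hT
  have hTpos : 0 < T := rpow_pos_of_pos hApos _
  have hkey : ∀ k, σ k ^ ((2:ℝ)/c) = a k ^ ((L:ℝ)/c) := by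
    intro k
    rw [ha, ← Real.rpow_mul (hσ k)]
    congr 1
    field_simp
  -- Lower bound via Hölder
  have hlow : ∀ μ : Fin K → ℝ, (∀ k, 0 < μ k) → (∑ k, μ k ^ 2) = 1 →
      T ≤ ∑ k, σ k ^ ((2:ℝ)/c) * μ k ^ (-(2:ℝ)/c) := by
    intro μ hμ hsum
    set S : ℝ := ∑ k, σ k ^ ((2:ℝ)/c) * μ k ^ (-(2:ℝ)/c) with hS
    have hSnon : 0 ≤ S := Finset.sum_nonneg fun k _ =>
      mul_nonneg (rpow_nonneg (hσ k) _) (rpow_nonneg (hμ k).le _)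
    have hpq : ((L:ℝ)/c).HolderConjugate (L:ℝ) := by
      rw [Real.holderConjugate_iff]; constructor
      · rw [lt_div_iff₀ hc0]; linarith
      · rw [inv_div]; field_simp; linarith
    have hold := Real.inner_le_Lp_mul_Lq_of_nonneg (s := Finset.univ) hpq
      (f := fun k => a k * μ k ^ (-(2:ℝ)/L)) (g := fun k => μ k ^ ((2:ℝ)/L))
      (fun k _ => mul_nonneg (hanon k) (rpow_nonneg (hμ k).le _))
      (fun k _ => rpow_nonneg (hμ k).le _)
    have e1 : ∑ k, (a k * μ k ^ (-(2:ℝ)/L)) * μ k ^ ((2:ℝ)/L) = A := by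
      rw [haA]
      refine Finset.sum_congr rfl fun k _ => ?_
      rw [mul_assoc, ← Real.rpow_add (hμ k),
        show -(2:ℝ)/(L:ℝ) + 2/(L:ℝ) = 0 by ring, Real.rpow_zero, mul_one]
    have e2 : ∑ k, (a k * μ k ^ (-(2:ℝ)/L)) ^ ((L:ℝ)/c) = S := by
      rw [hS]
      refine Finset.sum_congr rfl fun k _ => ?_
      rw [Real.mul_rpow (hanon k) (rpow_nonneg (hμ k).le _),
        ← Real.rpow_mul (hμ k).le, hkey k]
      congr 1
      rw [div_mul_div_comm, neg_mul, mul_comm (2:ℝ) (L:ℝ), neg_div,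
        mul_div_mul_left _ _ hLne, neg_div]
    have e3 : ∑ k, (μ k ^ ((2:ℝ)/L)) ^ (L:ℝ) = 1 := by
      rw [← hsum]
      refine Finset.sum_congr rfl fun k _ => ?_
      rw [← Real.rpow_mul (hμ k).le, div_mul_cancel₀ _ hLne,
        show ((2:ℝ)) = ((2:ℕ):ℝ) by norm_num, Real.rpow_natCast]
    rw [e1, e2, e3] at hold
    have hold2 : A ≤ S ^ (c/(L:ℝ)) := by
      calc A ≤ S ^ (1/((L:ℝ)/c)) * (1:ℝ) ^ (1/(L:ℝ)) := hold
        _ = S ^ (c/(L:ℝ)) := by rw [Real.one_rpow, mul_one, one_div, inv_div]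
    calc T = A ^ ((L:ℝ)/c) := rfl
      _ ≤ (S ^ (c/(L:ℝ))) ^ ((L:ℝ)/c) :=
          Real.rpow_le_rpow hApos.le hold2 (by positivity)
      _ = S := by
          rw [← Real.rpow_mul hSnon]
          rw [show c/(L:ℝ) * ((L:ℝ)/c) = 1 by field_simp]
          exact Real.rpow_one S
  -- Upper bound: construct near-optimal μ
  have hup : ∀ ε > 0, ∃ r ∈ { r | ∃ μ : Fin K → ℝ, (∀ k, 0 < μ k) ∧ (∑ k, μ k ^ 2) = 1 ∧
        r = ∑ k, σ k ^ ((2:ℝ)/c) * μ k ^ (-(2:ℝ)/c) }, r ≤ T + ε := by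
    intro ε hε
    set δ : ℝ := ε / T with hδ
    have hδpos : 0 < δ := div_pos hε hTpos
    have h1δ : (1:ℝ) < 1 + δ := by linarith
    set s : ℝ := (1+δ) ^ (-c) with hs
    have hs0 : 0 < s := rpow_pos_of_pos (by linarith) _
    have hs1 : s < 1 := Real.rpow_lt_one_of_one_lt_of_neg h1δ (by linarith)
    set x : Fin K → ℝ := fun k => s * a k / A + (1-s)/K with hx
    have hxpos : ∀ k, 0 < x k := by
      intro k
      have h1 : 0 ≤ s * a k / A := div_nonneg (mul_nonneg hs0.le (hanon k)) hApos.le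
      have h2 : 0 < (1-s)/K := div_pos (by linarith) (by exact_mod_cast hK)
      simp only [hx]; linarith
    have hsinv : s ^ (-(1:ℝ)/c) = 1 + δ := by
      rw [hs, ← Real.rpow_mul (by linarith : (0:ℝ) ≤ 1+δ)]
      rw [show (-c) * (-(1:ℝ)/c) = 1 by field_simp]
      exact Real.rpow_one _
    refine ⟨_, ⟨fun k => Real.sqrt (x k), fun k => Real.sqrt_pos.mpr (hxpos k), ?_, rfl⟩, ?_⟩
    · -- norm one
      have hsq : ∀ k ∈ Finset.univ, Real.sqrt (x k) ^ 2 = s/A * a k + (1-s)/K := by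
        intro k _
        rw [Real.sq_sqrt (hxpos k).le]
        show s * a k / A + (1-s)/K = _
        ring
      rw [Finset.sum_congr rfl hsq, Finset.sum_add_distrib, ← Finset.mul_sum, ← haA,
        Finset.sum_const, Finset.card_univ, Fintype.card_fin, nsmul_eq_mul]
      field_simp
      ring
    · -- value bound
      have hterm : ∀ k ∈ Finset.univ,
          σ k ^ ((2:ℝ)/c) * Real.sqrt (x k) ^ (-(2:ℝ)/c) ≤ a k * (s/A) ^ (-(1:ℝ)/c) := by
        intro k _
        have hsqrt : Real.sqrt (x k) ^ (-(2:ℝ)/c) = x k ^ (-(1:ℝ)/c) := by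
          rw [Real.sqrt_eq_rpow, ← Real.rpow_mul (hxpos k).le]
          congr 1
          field_simp
        rw [hsqrt]
        rcases eq_or_lt_of_le (hσ k) with h0 | hpos
        · have hak : a k = 0 := by
            show σ k ^ ((2:ℝ)/(L:ℝ)) = 0
            rw [← h0, Real.zero_rpow (by positivity)]
          rw [← h0, Real.zero_rpow (by positivity), hak, zero_mul, zero_mul]
        · have hak : 0 < a k := rpow_pos_of_pos hpos _
          have hxge : s * a k / A ≤ x k := by
            simp only [hx]
            have : 0 < (1-s)/K := div_pos (by linarith) (by exact_mod_cast hK)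
            linarith
          have h1 : x k ^ (-(1:ℝ)/c) ≤ (s * a k / A) ^ (-(1:ℝ)/c) :=
            Real.rpow_le_rpow_of_nonpos (by positivity) hxge
              (by rw [neg_div]; exact neg_nonpos.mpr (by positivity))
          calc σ k ^ ((2:ℝ)/c) * x k ^ (-(1:ℝ)/c)
              ≤ σ k ^ ((2:ℝ)/c) * (s * a k / A) ^ (-(1:ℝ)/c) :=
                mul_le_mul_of_nonneg_left h1 (rpow_nonneg (hσ k) _)
            _ = a k * (s/A) ^ (-(1:ℝ)/c) := by
                rw [hkey k, show s * a k / A = a k * (s/A) by ring,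
                  Real.mul_rpow hak.le (by positivity), ← mul_assoc,
                  ← Real.rpow_add hak,
                  show (L:ℝ)/c + -(1:ℝ)/c = 1 by field_simp; linarith,
                  Real.rpow_one]
      calc ∑ k, σ k ^ ((2:ℝ)/c) * Real.sqrt (x k) ^ (-(2:ℝ)/c)
          ≤ ∑ k, a k * (s/A) ^ (-(1:ℝ)/c) := Finset.sum_le_sum hterm
        _ = A * (s/A) ^ (-(1:ℝ)/c) := by rw [← Finset.sum_mul, ← haA]
        _ = T + ε := by
            have hinv : A ^ ((1:ℝ)/c) = (A ^ (-(1:ℝ)/c))⁻¹ := by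
              rw [← Real.rpow_neg hApos.le]
              congr 1
              ring
            have key : (s/A) ^ (-(1:ℝ)/c) = (1+δ) * A ^ ((1:ℝ)/c) := by
              rw [Real.div_rpow hs0.le hApos.le, hsinv, hinv, div_eq_mul_inv]
            rw [key, show A * ((1+δ) * A ^ ((1:ℝ)/c)) = (1+δ) * (A * A ^ ((1:ℝ)/c)) by ring]
            have hAA : A * A ^ ((1:ℝ)/c) = T := by
              rw [hT]
              nth_rewrite 1 [← Real.rpow_one A]
              rw [← Real.rpow_add hApos]
              congr 1
              field_simp
              linarith
            rw [hAA, show ((1:ℝ)+δ) * T = T + δ * T by ring, hδ,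
              div_mul_cancel₀ _ (ne_of_gt hTpos)]
  -- assemble
  have hbdd : ∀ r ∈ { r | ∃ μ : Fin K → ℝ, (∀ k, 0 < μ k) ∧ (∑ k, μ k ^ 2) = 1 ∧
        r = ∑ k, σ k ^ ((2:ℝ)/c) * μ k ^ (-(2:ℝ)/c) }, T ≤ r := by
    rintro r ⟨μ, hμ, hsum, rfl⟩
    exact hlow μ hμ hsum
  apply le_antisymm
  · apply le_of_forall_pos_le_add
    intro ε hε
    obtain ⟨r, hrmem, hrle⟩ := hup ε hε
    exact le_trans (csInf_le ⟨T, hbdd⟩ hrmem) hrle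
  · obtain ⟨r₀, hr₀, _⟩ := hup 1 one_pos
    exact le_csInf ⟨r₀, hr₀⟩ hbdd
end

section
/- For every nonzero matrix M ∈ ℝ^{K×d}, Φ_L(M) converges to rank(M) as the integer L tends to infinity. -/
open Matrix Filter Topology

section aux
variable {n : ℕ} {A : Matrix (Fin n) (Fin n) ℝ} (hA : A.IsHermitian)

private lemma dot_self_basis (i : Fin n) :
    ⇑(hA.eigenvectorBasis i) ⬝ᵥ ⇑(hA.eigenvectorBasis i) = 1 := by
  have h1 : ‖hA.eigenvectorBasis i‖ = 1 := hA.eigenvectorBasis.orthonormal.1 i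
  have h2 := EuclideanSpace.inner_eq_star_dotProduct (𝕜 := ℝ)
    (hA.eigenvectorBasis i) (hA.eigenvectorBasis i)
  have h3 : (inner ℝ (hA.eigenvectorBasis i) (hA.eigenvectorBasis i) : ℝ) = 1 := by
    rw [real_inner_self_eq_norm_sq, h1]; norm_num
  rw [h3] at h2
  simpa using h2.symm

private lemma eigenvalues_eq_real (i : Fin n) :
    hA.eigenvalues i = ⇑(hA.eigenvectorBasis i) ⬝ᵥ (A *ᵥ ⇑(hA.eigenvectorBasis i)) := by
  have := hA.eigenvalues_eq i
  simpa using this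

private lemma quad_expansion (v : Fin n → ℝ) :
    v ⬝ᵥ (A *ᵥ v) = ∑ i, hA.eigenvalues i *
      ((star (hA.eigenvectorUnitary : Matrix (Fin n) (Fin n) ℝ) *ᵥ v) i)^2 := by
  set U : Matrix (Fin n) (Fin n) ℝ := (hA.eigenvectorUnitary : Matrix (Fin n) (Fin n) ℝ) with hU
  set y : Fin n → ℝ := star U *ᵥ v with hy
  have hspec := hA.spectral_theorem
  have hspec' : A = U * diagonal hA.eigenvalues * star U := by
    rw [Unitary.conjStarAlgAut_apply] at hspec
    exact hspec
  calc v ⬝ᵥ (A *ᵥ v) = v ⬝ᵥ ((U * diagonal hA.eigenvalues * star U) *ᵥ v) := by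
        rw [← hspec']
    _ = y ⬝ᵥ (diagonal hA.eigenvalues *ᵥ y) := by
        rw [← mulVec_mulVec, ← mulVec_mulVec, dotProduct_mulVec v U, hy]
        congr 1
        rw [star_eq_conjTranspose, conjTranspose_eq_transpose_of_trivial, ← vecMul_transpose,
          transpose_transpose]
    _ = ∑ i, hA.eigenvalues i * (y i)^2 := by
        simp [dotProduct, mulVec_diagonal]
        ring_nf
        exact Finset.sum_congr rfl fun i _ => by ring

private lemma sumsq_coords (v : Fin n → ℝ) :
    ∑ i, ((star (hA.eigenvectorUnitary : Matrix (Fin n) (Fin n) ℝ) *ᵥ v) i)^2 = v ⬝ᵥ v := by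
  set U : Matrix (Fin n) (Fin n) ℝ := (hA.eigenvectorUnitary : Matrix (Fin n) (Fin n) ℝ) with hU
  have hUU : U * star U = 1 := Matrix.mem_unitaryGroup_iff.mp hA.eigenvectorUnitary.2
  have h1 : ∑ i, ((star U *ᵥ v) i)^2 = (star U *ᵥ v) ⬝ᵥ (star U *ᵥ v) := by
    simp [dotProduct, pow_two]
  rw [h1, dotProduct_mulVec]
  have hUU' : U * Uᵀ = 1 := by
    rw [← hUU, star_eq_conjTranspose, conjTranspose_eq_transpose_of_trivial]
  have h2 : (star U *ᵥ v) ᵥ* star U = (U * Uᵀ) *ᵥ v := by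
    rw [star_eq_conjTranspose, conjTranspose_eq_transpose_of_trivial, vecMul_transpose,
      mulVec_mulVec]
  rw [h2, hUU', one_mulVec]

private lemma coord_eq (v : Fin n → ℝ) (i : Fin n) :
    (star (hA.eigenvectorUnitary : Matrix (Fin n) (Fin n) ℝ) *ᵥ v) i
      = ⇑(hA.eigenvectorBasis i) ⬝ᵥ v := by
  simp [mulVec, dotProduct, Matrix.star_apply, hA.eigenvectorUnitary_apply]

private lemma dot_mulVec_symm {H : Matrix (Fin n) (Fin n) ℝ} (hH : H.IsHermitian)
    (u v : Fin n → ℝ) : u ⬝ᵥ (H *ᵥ v) = (H *ᵥ u) ⬝ᵥ v := by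
  have ht : Hᵀ = H := by rw [← conjTranspose_eq_transpose_of_trivial]; exact hH.eq
  rw [dotProduct_mulVec]
  conv_lhs => rw [← ht, vecMul_transpose]

/-- An eigenvalue of a hermitian matrix is at most the sum of absolute values of entries. -/
private lemma eig_le_entry_sum (j : Fin n) :
    hA.eigenvalues j ≤ ∑ i, ∑ k, |A i k| := by
  set v : Fin n → ℝ := ⇑(hA.eigenvectorBasis j) with hv
  have hvv : v ⬝ᵥ v = 1 := dot_self_basis hA j
  have hb : ∀ i, |v i| ≤ 1 := by
    intro i
    have h1 : v i ^ 2 ≤ 1 := by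
      rw [← hvv]
      have : v ⬝ᵥ v = ∑ i, v i ^ 2 := by simp [dotProduct, pow_two]
      rw [this]
      exact Finset.single_le_sum (fun i _ => sq_nonneg (v i)) (Finset.mem_univ i)
    exact (sq_le_one_iff_abs_le_one (v i)).mp h1
  rw [eigenvalues_eq_real hA j]
  have h2 : v ⬝ᵥ (A *ᵥ v) = ∑ i, ∑ k, v i * (A i k * v k) := by
    simp [dotProduct, mulVec, Finset.mul_sum]
  rw [h2]
  apply Finset.sum_le_sum
  intro i _
  apply Finset.sum_le_sum
  intro k _
  calc v i * (A i k * v k) ≤ |v i * (A i k * v k)| := le_abs_self _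
    _ = |v i| * |A i k| * |v k| := by rw [abs_mul, abs_mul]; ring
    _ ≤ 1 * |A i k| * 1 := by
        apply mul_le_mul (mul_le_mul (hb i) le_rfl (abs_nonneg _) (by norm_num)) (hb k)
          (abs_nonneg _)
        positivity
    _ = |A i k| := by ring

end aux

private lemma rank_pos_of_ne_zero {K d : ℕ} (M : Matrix (Fin K) (Fin d) ℝ) (hM : M ≠ 0) :
    0 < M.rank := by
  rcases Nat.eq_zero_or_pos M.rank with h | h
  · exfalso
    apply hM
    have h1 : LinearMap.range M.mulVecLin = ⊥ := by
      rw [Matrix.rank] at h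
      exact Submodule.finrank_eq_zero.mp h
    have h2 : M.mulVecLin = 0 := LinearMap.range_eq_bot.mp h1
    ext i j
    have h3 : M.mulVecLin (Pi.single j 1) = 0 := by rw [h2]; rfl
    have h4 := congrFun h3 i
    simpa [Matrix.mulVecLin_apply, Matrix.mulVec_single] using h4
  · exact h

private lemma card_nonzero_eigs {K d : ℕ} (M : Matrix (Fin K) (Fin d) ℝ)
    (l : Fin K → ℝ) (hl : ∀ k, l k ≠ 0) :
    Fintype.card {j // (Matrix.isHermitian_conjTranspose_mul_self
      (Matrix.diagonal (fun k => (l k)⁻¹) * M)).eigenvalues j ≠ 0} = M.rank := by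
  set B : Matrix (Fin K) (Fin d) ℝ := Matrix.diagonal (fun k => (l k)⁻¹) * M with hB
  have h1 := (Matrix.isHermitian_conjTranspose_mul_self B).rank_eq_card_non_zero_eigs
  have h2 : (Bᴴ * B).rank = B.rank := Matrix.rank_conjTranspose_mul_self B
  have h3 : B.rank = M.rank := by
    apply Matrix.rank_mul_eq_right_of_isUnit_det
    rw [Matrix.det_diagonal]
    rw [isUnit_iff_ne_zero]
    exact Finset.prod_ne_zero_iff.mpr (fun k _ => inv_ne_zero (hl k))
  rw [← h1, h2, h3]

private lemma sum_rpow_ge {n : ℕ} (f : Fin n → ℝ) (p : Fin n → Prop) [DecidablePred p]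
    (q c : ℝ) (hq : 0 ≤ q) (hc : 0 ≤ c) (hf : ∀ j, 0 ≤ f j) (hlb : ∀ j, p j → c ≤ f j) :
    ((Finset.univ.filter p).card : ℝ) * c ^ q ≤ ∑ j, f j ^ q := by
  have h1 : ∑ j ∈ Finset.univ.filter p, f j ^ q ≤ ∑ j, f j ^ q := by
    apply Finset.sum_le_sum_of_subset_of_nonneg (Finset.filter_subset _ _)
    intro j _ _
    exact Real.rpow_nonneg (hf j) q
  refine le_trans ?_ h1
  rw [← nsmul_eq_mul]
  exact Finset.card_nsmul_le_sum _ _ _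
    (fun j hj => Real.rpow_le_rpow hc (hlb j (Finset.mem_filter.mp hj).2) hq)

private lemma sum_rpow_le {n : ℕ} (f : Fin n → ℝ) (p : Fin n → Prop) [DecidablePred p]
    (q C : ℝ) (hq : 0 < q) (hC : 0 ≤ C) (hf : ∀ j, 0 ≤ f j)
    (hub : ∀ j, p j → f j ≤ C) (hvanish : ∀ j, ¬ p j → f j = 0) :
    ∑ j, f j ^ q ≤ ((Finset.univ.filter p).card : ℝ) * C ^ q := by
  have hsplit : ∑ j, f j ^ q = ∑ j ∈ Finset.univ.filter p, f j ^ q := by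
    symm
    apply Finset.sum_filter_of_ne
    intro j _ hne
    by_contra hp
    rw [hvanish j hp, Real.zero_rpow hq.ne'] at hne
    exact hne rfl
  rw [hsplit]
  calc ∑ j ∈ Finset.univ.filter p, f j ^ q ≤ ∑ _j ∈ Finset.univ.filter p, C ^ q := by
        apply Finset.sum_le_sum
        intro j hj
        exact Real.rpow_le_rpow (hf j) (hub j (Finset.mem_filter.mp hj).2) hq.le
    _ = ((Finset.univ.filter p).card : ℝ) * C ^ q := by
        rw [Finset.sum_const, nsmul_eq_mul]

private lemma eig_lower_bound {K d : ℕ} (M : Matrix (Fin K) (Fin d) ℝ)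
    (l : Fin K → ℝ) (hl : ∀ k, 0 < l k) (hl2 : (∑ k, l k ^ 2) = 1)
    (γ : ℝ)
    (hγ : ∀ i, (Matrix.isHermitian_conjTranspose_mul_self M).eigenvalues i ≠ 0 →
      γ ≤ (Matrix.isHermitian_conjTranspose_mul_self M).eigenvalues i)
    (j : Fin d)
    (hj : (Matrix.isHermitian_conjTranspose_mul_self
      (Matrix.diagonal (fun k => (l k)⁻¹) * M)).eigenvalues j ≠ 0) :
    γ ≤ (Matrix.isHermitian_conjTranspose_mul_self
      (Matrix.diagonal (fun k => (l k)⁻¹) * M)).eigenvalues j := by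
  set B : Matrix (Fin K) (Fin d) ℝ := Matrix.diagonal (fun k => (l k)⁻¹) * M with hB
  set hH := Matrix.isHermitian_conjTranspose_mul_self B
  set hG := Matrix.isHermitian_conjTranspose_mul_self M
  set v : Fin d → ℝ := ⇑(hH.eigenvectorBasis j) with hv
  set μ : ℝ := hH.eigenvalues j with hμdef
  have hl1 : ∀ k, l k ≤ 1 := by
    intro k
    have h1 : l k ^ 2 ≤ 1 := by
      rw [← hl2]
      exact Finset.single_le_sum (fun i _ => sq_nonneg (l i)) (Finset.mem_univ k)
    nlinarith [hl k]
  set w : Fin K → ℝ := fun k => (l k)⁻¹ * (l k)⁻¹ - 1 with hw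
  have hw0 : ∀ k, 0 ≤ w k := by
    intro k
    have h1 : (1:ℝ) ≤ (l k)⁻¹ := one_le_inv₀ (hl k) |>.mpr (hl1 k)
    simp only [hw]
    nlinarith
  have hdec : Bᴴ * B = Mᴴ * M + Mᴴ * diagonal w * M := by
    rw [hB, conjTranspose_mul, diagonal_conjTranspose]
    have hst : star (fun k => (l k)⁻¹) = (fun k => (l k)⁻¹) := by
      funext k; simp
    rw [hst]
    have : Mᴴ * diagonal (fun k => (l k)⁻¹) * (diagonal (fun k => (l k)⁻¹) * M)
        = Mᴴ * (diagonal (fun k => (l k)⁻¹) * diagonal (fun k => (l k)⁻¹)) * M := by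
      simp only [← Matrix.mul_assoc]
    rw [this, diagonal_mul_diagonal]
    have h2 : diagonal (fun k => (l k)⁻¹ * (l k)⁻¹)
        = (1 : Matrix (Fin K) (Fin K) ℝ) + diagonal w := by
      rw [← diagonal_one, diagonal_add]
      congr 1; funext k; simp [hw]
    rw [h2, Matrix.mul_add, Matrix.mul_one, Matrix.add_mul]
  have hPSD : (Mᴴ * diagonal w * M).PosSemidef :=
    (Matrix.PosSemidef.diagonal (Pi.le_def.mpr hw0)).conjTranspose_mul_mul_same M
  have hvv : v ⬝ᵥ v = 1 := dot_self_basis hH j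
  have hray : μ = v ⬝ᵥ ((Bᴴ * B) *ᵥ v) := eigenvalues_eq_real hH j
  have hge : v ⬝ᵥ ((Mᴴ * M) *ᵥ v) ≤ μ := by
    rw [hray, hdec, add_mulVec, dotProduct_add]
    have h0 : 0 ≤ v ⬝ᵥ ((Mᴴ * diagonal w * M) *ᵥ v) := by
      have := hPSD.dotProduct_mulVec_nonneg v
      simpa using this
    linarith
  set y : Fin d → ℝ := star (hG.eigenvectorUnitary : Matrix (Fin d) (Fin d) ℝ) *ᵥ v with hy
  have hexp : v ⬝ᵥ ((Mᴴ * M) *ᵥ v) = ∑ i, hG.eigenvalues i * (y i)^2 := quad_expansion hG v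
  have hsum : ∑ i, (y i)^2 = 1 := by rw [hy, sumsq_coords hG v, hvv]
  have hzero : ∀ i, hG.eigenvalues i = 0 → y i = 0 := by
    intro i hi
    set u : Fin d → ℝ := ⇑(hG.eigenvectorBasis i) with hu
    have hGu : (Mᴴ * M) *ᵥ u = 0 := by
      have := hG.mulVec_eigenvectorBasis i
      rw [hi, zero_smul] at this; exact this
    have hMu : M *ᵥ u = 0 := by
      have h1 : (M *ᵥ u) ⬝ᵥ (M *ᵥ u) = 0 := by
        have h2 : (M *ᵥ u) ⬝ᵥ (M *ᵥ u) = u ⬝ᵥ ((Mᴴ * M) *ᵥ u) := by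
          rw [← mulVec_mulVec, dotProduct_mulVec u, vecMul_conjTranspose]
          simp
        rw [h2, hGu, dotProduct_zero]
      exact dotProduct_self_eq_zero.mp h1
    have hHu : (Bᴴ * B) *ᵥ u = 0 := by
      rw [← mulVec_mulVec, hB, ← mulVec_mulVec, hMu, mulVec_zero, mulVec_zero]
    have hHv : (Bᴴ * B) *ᵥ v = μ • v := hH.mulVec_eigenvectorBasis j
    have hveq : v = μ⁻¹ • ((Bᴴ * B) *ᵥ v) := by
      rw [hHv, smul_smul, inv_mul_cancel₀ hj, one_smul]
    have hyi : y i = u ⬝ᵥ v := coord_eq hG v i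
    rw [hyi, hveq, dotProduct_smul, smul_eq_mul]
    have huv : u ⬝ᵥ ((Bᴴ * B) *ᵥ v) = 0 := by
      rw [dot_mulVec_symm hH, hHu, zero_dotProduct]
    rw [huv, mul_zero]
  have hfinal : γ ≤ ∑ i, hG.eigenvalues i * (y i)^2 := by
    calc γ = γ * ∑ i, (y i)^2 := by rw [hsum, mul_one]
      _ = ∑ i, γ * (y i)^2 := Finset.mul_sum _ _ _
      _ ≤ ∑ i, hG.eigenvalues i * (y i)^2 := by
          apply Finset.sum_le_sum
          intro i _
          by_cases hi : hG.eigenvalues i = 0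
          · rw [hi, hzero i hi]; ring_nf; rfl
          · exact mul_le_mul_of_nonneg_right (hγ i hi) (sq_nonneg _)
  linarith [hexp ▸ hge]

/-- for a nonzero matrix `M`, `Φ_L(M) → rank(M)` as `L → ∞`. -/
theorem Phi_tendsto_rank {K d : ℕ} (M : Matrix (Fin K) (Fin d) ℝ) (hM : M ≠ 0) :
    Filter.Tendsto (fun L : ℕ => Phi L M) Filter.atTop (nhds (M.rank : ℝ)) := by
  classical
  have hK : K ≠ 0 := by
    rintro rfl
    exact hM (by ext i j; exact i.elim0)
  set hG := Matrix.isHermitian_conjTranspose_mul_self M with hGdef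
  set r : ℕ := M.rank with hr
  have hr0 : 0 < r := rank_pos_of_ne_zero M hM
  have hGpsd : (Mᴴ * M).PosSemidef := Matrix.posSemidef_conjTranspose_mul_self M
  -- γ : smallest nonzero eigenvalue of MᴴM
  set T : Finset (Fin d) := Finset.univ.filter (fun i => hG.eigenvalues i ≠ 0) with hT
  have hcardT : T.card = r := by
    have h1 := hG.rank_eq_card_non_zero_eigs
    have h2 : (Mᴴ * M).rank = M.rank := Matrix.rank_conjTranspose_mul_self M
    have h3 : Fintype.card {i // hG.eigenvalues i ≠ 0} = T.card := Fintype.card_subtype _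
    rw [h2, h3] at h1
    exact h1.symm
  have hTne : T.Nonempty := by rw [← Finset.card_pos, hcardT]; exact hr0
  obtain ⟨i0, hi0T, hi0min⟩ := T.exists_min_image hG.eigenvalues hTne
  set γ : ℝ := hG.eigenvalues i0 with hγdef
  have hγpos : 0 < γ :=
    lt_of_le_of_ne (hGpsd.eigenvalues_nonneg i0) (Ne.symm (Finset.mem_filter.mp hi0T).2)
  set c : ℝ := min γ 1 with hc
  have hc0 : 0 < c := lt_min hγpos one_pos
  have hc1 : c ≤ 1 := min_le_right _ _
  set s : ℝ := Real.sqrt c with hs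
  have hs0 : 0 < s := Real.sqrt_pos.mpr hc0
  have hs1 : s ≤ 1 := by
    rw [hs, show (1:ℝ) = Real.sqrt 1 by simp]
    exact Real.sqrt_le_sqrt hc1
  -- the fixed witness λ₀
  set l0 : Fin K → ℝ := fun _ => Real.sqrt ((K : ℝ)⁻¹) with hl0
  have hKpos : (0:ℝ) < (K:ℝ) := by
    have : 0 < K := Nat.pos_of_ne_zero hK
    exact_mod_cast this
  have hl0pos : ∀ k, 0 < l0 k := fun k => Real.sqrt_pos.mpr (by positivity)
  have hl0sum : (∑ k, l0 k ^ 2) = 1 := by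
    simp only [hl0]
    rw [Finset.sum_const, Real.sq_sqrt (by positivity)]
    simp only [Finset.card_univ, Fintype.card_fin, nsmul_eq_mul]
    field_simp
  set B0 : Matrix (Fin K) (Fin d) ℝ := Matrix.diagonal (fun k => (l0 k)⁻¹) * M with hB0
  set hH0 := Matrix.isHermitian_conjTranspose_mul_self B0 with hH0def
  set C : ℝ := max 1 (∑ i, ∑ k, |(B0ᴴ * B0) i k|) with hCdef
  have hC1 : (1:ℝ) ≤ C := le_max_left _ _
  have hCub : ∀ j, hH0.eigenvalues j ≤ C :=
    fun j => le_trans (eig_le_entry_sum hH0 j) (le_max_right _ _)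
  set S : ℝ := Real.sqrt C with hS
  have hS1 : (1:ℝ) ≤ S := by
    rw [hS, show (1:ℝ) = Real.sqrt 1 by simp]
    exact Real.sqrt_le_sqrt hC1
  have hS0 : 0 < S := lt_of_lt_of_le one_pos hS1
  have hγmin : ∀ i, hG.eigenvalues i ≠ 0 → γ ≤ hG.eigenvalues i := by
    intro i hi
    exact hi0min i (Finset.mem_filter.mpr ⟨Finset.mem_univ _, hi⟩)
  -- nonnegativity of schatten quantities
  have hschpow_nonneg : ∀ (A : Matrix (Fin K) (Fin d) ℝ) (q : ℝ), 0 ≤ schattenPow A q := by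
    intro A q
    exact Finset.sum_nonneg fun j _ => Real.rpow_nonneg (Real.sqrt_nonneg _) _
  have hsch_nonneg : ∀ (A : Matrix (Fin K) (Fin d) ℝ) (q : ℝ), 0 ≤ schattenNorm A q :=
    fun A q => Real.rpow_nonneg (hschpow_nonneg A q) _
  -- value rewriting for L ≥ 2
  have hval : ∀ L : ℕ, 2 ≤ L → ∀ A : Matrix (Fin K) (Fin d) ℝ,
      schattenNorm A (2/((L:ℝ)-1)) ^ ((2:ℝ)/L)
        = schattenPow A (2/((L:ℝ)-1)) ^ (((L:ℝ)-1)/(L:ℝ)) := by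
    intro L hL A
    have hL2 : (2:ℝ) ≤ (L:ℝ) := by exact_mod_cast hL
    have hL1 : (0:ℝ) < (L:ℝ) - 1 := by linarith
    have hLpos : (0:ℝ) < (L:ℝ) := by linarith
    rw [schattenNorm, ← Real.rpow_mul (hschpow_nonneg A _)]
    congr 1
    field_simp
  -- the exponent q and its properties
  have hq_pos : ∀ L : ℕ, 2 ≤ L → (0:ℝ) < 2/((L:ℝ)-1) := by
    intro L hL
    have hL2 : (2:ℝ) ≤ (L:ℝ) := by exact_mod_cast hL
    have : (0:ℝ) < (L:ℝ) - 1 := by linarith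
    positivity
  -- upper bound on Phi
  have hPhi_ub : ∀ L : ℕ, 2 ≤ L →
      Phi L M ≤ ((r:ℝ) * S ^ (2/((L:ℝ)-1))) ^ (((L:ℝ)-1)/(L:ℝ)) := by
    intro L hL
    have hL2 : (2:ℝ) ≤ (L:ℝ) := by exact_mod_cast hL
    have hLpos : (0:ℝ) < (L:ℝ) := by linarith
    have hexp_nonneg : (0:ℝ) ≤ ((L:ℝ)-1)/(L:ℝ) := div_nonneg (by linarith) (by linarith)
    have step1 : Phi L M ≤ schattenNorm B0 (2/((L:ℝ)-1)) ^ ((2:ℝ)/L) := by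
      apply csInf_le
      · refine ⟨0, ?_⟩
        rintro x ⟨l, hlp, hls, rfl⟩
        exact Real.rpow_nonneg (hsch_nonneg _ _) _
      · exact ⟨l0, hl0pos, hl0sum, rfl⟩
    rw [hval L hL B0] at step1
    refine le_trans step1 ?_
    apply Real.rpow_le_rpow (hschpow_nonneg _ _) ?_ hexp_nonneg
    -- schattenPow B0 q ≤ r * S^q
    have hcard : ((Finset.univ.filter
        (fun j => hH0.eigenvalues j ≠ 0)).card : ℝ) = (r:ℝ) := by
      have h1 := card_nonzero_eigs M l0 (fun k => (hl0pos k).ne')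
      have h2 : Fintype.card {j // hH0.eigenvalues j ≠ 0}
          = (Finset.univ.filter (fun j => hH0.eigenvalues j ≠ 0)).card :=
        Fintype.card_subtype _
      rw [h2] at h1
      exact_mod_cast h1
    rw [schattenPow, ← hcard]
    apply sum_rpow_le (matSingVal B0) (fun j => hH0.eigenvalues j ≠ 0)
      _ S (hq_pos L hL) hS0.le (fun j => Real.sqrt_nonneg _)
    · intro j _
      rw [matSingVal, hS]
      exact Real.sqrt_le_sqrt (hCub j)
    · intro j hj
      rw [not_not] at hj
      rw [matSingVal, hj, Real.sqrt_zero]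
  -- lower bound on Phi
  have hPhi_lb : ∀ L : ℕ, 2 ≤ L →
      ((r:ℝ) * s ^ (2/((L:ℝ)-1))) ^ (((L:ℝ)-1)/(L:ℝ)) ≤ Phi L M := by
    intro L hL
    have hL2 : (2:ℝ) ≤ (L:ℝ) := by exact_mod_cast hL
    have hLpos : (0:ℝ) < (L:ℝ) := by linarith
    have hexp_nonneg : (0:ℝ) ≤ ((L:ℝ)-1)/(L:ℝ) := div_nonneg (by linarith) (by linarith)
    apply le_csInf
    · exact ⟨_, l0, hl0pos, hl0sum, rfl⟩
    rintro x ⟨l, hlp, hls, rfl⟩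
    rw [hval L hL]
    set B : Matrix (Fin K) (Fin d) ℝ := Matrix.diagonal (fun k => (l k)⁻¹) * M with hB
    set hH := Matrix.isHermitian_conjTranspose_mul_self B with hHdef
    apply Real.rpow_le_rpow
      (mul_nonneg (Nat.cast_nonneg r) (Real.rpow_nonneg hs0.le _)) ?_ hexp_nonneg
    have hcard : ((Finset.univ.filter
        (fun j => hH.eigenvalues j ≠ 0)).card : ℝ) = (r:ℝ) := by
      have h1 := card_nonzero_eigs M l (fun k => (hlp k).ne')
      have h2 : Fintype.card {j // hH.eigenvalues j ≠ 0}
          = (Finset.univ.filter (fun j => hH.eigenvalues j ≠ 0)).card :=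
        Fintype.card_subtype _
      rw [h2] at h1
      exact_mod_cast h1
    rw [schattenPow, ← hcard]
    apply sum_rpow_ge (matSingVal B) (fun j => hH.eigenvalues j ≠ 0)
      _ s (hq_pos L hL).le hs0.le (fun j => Real.sqrt_nonneg _)
    intro j hj
    rw [matSingVal, hs]
    apply Real.sqrt_le_sqrt
    calc c ≤ γ := min_le_left _ _
      _ ≤ hH.eigenvalues j := eig_lower_bound M l hlp hls γ hγmin j hj
  -- limits
  have htop : Tendsto (fun L : ℕ => (L:ℝ) - 1) atTop atTop := by
    have := tendsto_atTop_add_const_right atTop (-1 : ℝ) tendsto_natCast_atTop_atTop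
    simpa [sub_eq_add_neg] using this
  have hq0 : Tendsto (fun L : ℕ => 2/((L:ℝ)-1)) atTop (𝓝 0) :=
    tendsto_const_nhds.div_atTop htop
  have hexp2 : Tendsto (fun L : ℕ => ((L:ℝ)-1)/(L:ℝ)) atTop (𝓝 1) := by
    have h1 : Tendsto (fun L : ℕ => 1 - 1/(L:ℝ)) atTop (𝓝 (1 - 0)) :=
      tendsto_const_nhds.sub tendsto_one_div_atTop_nhds_zero_nat
    rw [sub_zero] at h1
    apply h1.congr'
    filter_upwards [eventually_ge_atTop 1] with L hL
    have hLne : (L:ℝ) ≠ 0 := by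
      have : (1:ℝ) ≤ (L:ℝ) := by exact_mod_cast hL
      linarith
    field_simp
  have hlim : ∀ t : ℝ, 0 < t →
      Tendsto (fun L : ℕ => ((r:ℝ) * t ^ (2/((L:ℝ)-1))) ^ (((L:ℝ)-1)/(L:ℝ)))
        atTop (𝓝 (r:ℝ)) := by
    intro t ht
    have h1 : Tendsto (fun L : ℕ => t ^ (2/((L:ℝ)-1))) atTop (𝓝 (t ^ (0:ℝ))) :=
      Filter.Tendsto.rpow tendsto_const_nhds hq0 (Or.inl ht.ne')
    rw [Real.rpow_zero] at h1
    have h2 : Tendsto (fun L : ℕ => (r:ℝ) * t ^ (2/((L:ℝ)-1))) atTop (𝓝 ((r:ℝ) * 1)) :=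
      tendsto_const_nhds.mul h1
    rw [mul_one] at h2
    have hrne : (r:ℝ) ≠ 0 := by
      have : (0:ℝ) < (r:ℝ) := by exact_mod_cast hr0
      exact this.ne'
    have h3 := Filter.Tendsto.rpow h2 hexp2 (Or.inl hrne)
    rwa [Real.rpow_one] at h3
  refine tendsto_of_tendsto_of_tendsto_of_le_of_le' (hlim s hs0) (hlim S hS0) ?_ ?_
  · filter_upwards [eventually_ge_atTop 2] with L hL using hPhi_lb L hL
  · filter_upwards [eventually_ge_atTop 2] with L hL using hPhi_ub L hL
end

section
/- Let X ⊆ ℝ^d be a convex set with nonempty interior, let f : X → ℝ be given by f(x) = Σ_{k=1}^K a_k [w_kᵀ x + b_k]_+ + c, and let u ∈ ℝ^d. If for Lebesgue-almost every x ∈ X the function f is differentiable at x with ∇f(x)ᵀ u = 0, then f(x + u) = f(x) for every x ∈ X such that x + u ∈ X. -/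
open MeasureTheory

noncomputable section

abbrev Euc (d : ℕ) : Type := EuclideanSpace ℝ (Fin d)

def relu (t : ℝ) : ℝ := max t 0

end

section AuxLemmas
open MeasureTheory Set


noncomputable def reluSlope (α β s : ℝ) : ℝ :=
  if 0 < α + s * β then β else if α + s * β = 0 then max β 0 else 0

lemma reluSlope_abs_le (α β s : ℝ) : |reluSlope α β s| ≤ |β| := by
  unfold reluSlope
  split_ifs with h1 h2
  · exact le_refl _
  · rcases le_or_gt β 0 with h | h
    · simp [max_eq_right h]
    · simp [max_eq_left h.le]
  · simp

lemma relu_hasDerivWithinAt (α β s : ℝ) :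
    HasDerivWithinAt (fun t => max (α + t * β) 0) (reluSlope α β s) (Ici s) s := by
  rcases lt_trichotomy (α + s * β) 0 with h | h | h
  · have : reluSlope α β s = 0 := by unfold reluSlope; rw [if_neg (by linarith), if_neg (by linarith)]
    rw [this]
    have hev : (fun t => max (α + t * β) 0) =ᶠ[nhds s] (fun _ => (0:ℝ)) := by
      have h2 : ∀ᶠ t in nhds s, α + t * β < 0 := by
        have hc : Continuous fun t : ℝ => α + t * β := by continuity
        exact hc.continuousAt.eventually_lt continuousAt_const h
      filter_upwards [h2] with t ht
      exact max_eq_right ht.le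
    exact ((hasDerivAt_const s (0:ℝ)).congr_of_eventuallyEq hev).hasDerivWithinAt
  · -- kink
    have hrs : reluSlope α β s = max β 0 := by unfold reluSlope; rw [if_neg (by linarith), if_pos h]
    rw [hrs]
    rcases le_or_gt β 0 with hβ | hβ
    · rw [max_eq_right hβ]
      apply (hasDerivWithinAt_const s (Ici s) (0:ℝ)).congr
      · intro t ht
        have : α + t * β ≤ 0 := by nlinarith [ht.out]
        simp [max_eq_right this]
      · simp [max_eq_right h.le]
    · rw [max_eq_left hβ.le]
      have hlin : HasDerivWithinAt (fun t : ℝ => α + t * β) β (Ici s) s := by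
        simpa using (((hasDerivAt_id s).mul_const β).const_add α).hasDerivWithinAt
      apply hlin.congr
      · intro t ht
        have : 0 ≤ α + t * β := by nlinarith [ht.out]
        simp [max_eq_left this]
      · simp [max_eq_left (le_of_eq h.symm)]
  · have hrs : reluSlope α β s = β := by unfold reluSlope; rw [if_pos h]
    rw [hrs]
    have hev : (fun t => max (α + t * β) 0) =ᶠ[nhds s] (fun t => α + t * β) := by
      have h2 : ∀ᶠ t in nhds s, 0 < α + t * β := by
        have hc : Continuous fun t : ℝ => α + t * β := by continuity
        exact continuousAt_const.eventually_lt hc.continuousAt h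
      filter_upwards [h2] with t ht
      exact max_eq_left ht.le
    have hlin : HasDerivAt (fun t : ℝ => α + t * β) β s := by
      simpa using (((hasDerivAt_id s).mul_const β).const_add α)
    exact (hlin.congr_of_eventuallyEq hev).hasDerivWithinAt

lemma relu_hasDerivAt (α β s : ℝ) (h : β = 0 ∨ α + s * β ≠ 0) :
    HasDerivAt (fun t => max (α + t * β) 0) (reluSlope α β s) s := by
  rcases h with h | h
  · subst h
    have hrs : reluSlope α 0 s = 0 := by
      unfold reluSlope; split_ifs <;> simp
    rw [hrs]
    have : (fun t : ℝ => max (α + t * 0) 0) = fun _ => max α 0 := by funext t; simp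
    rw [this]; exact hasDerivAt_const s _
  rcases lt_or_gt_of_ne h with h | h
  · have hrs : reluSlope α β s = 0 := by unfold reluSlope; rw [if_neg (by linarith), if_neg (by linarith)]
    rw [hrs]
    have hev : (fun t => max (α + t * β) 0) =ᶠ[nhds s] (fun _ => (0:ℝ)) := by
      have h2 : ∀ᶠ t in nhds s, α + t * β < 0 := by
        have hc : Continuous fun t : ℝ => α + t * β := by continuity
        exact hc.continuousAt.eventually_lt continuousAt_const h
      filter_upwards [h2] with t ht
      exact max_eq_right ht.le
    exact (hasDerivAt_const s (0:ℝ)).congr_of_eventuallyEq hev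
  · have hrs : reluSlope α β s = β := by unfold reluSlope; rw [if_pos h]
    rw [hrs]
    have hev : (fun t => max (α + t * β) 0) =ᶠ[nhds s] (fun t => α + t * β) := by
      have h2 : ∀ᶠ t in nhds s, 0 < α + t * β := by
        have hc : Continuous fun t : ℝ => α + t * β := by continuity
        exact continuousAt_const.eventually_lt hc.continuousAt h
      filter_upwards [h2] with t ht
      exact max_eq_left ht.le
    have hlin : HasDerivAt (fun t : ℝ => α + t * β) β s := by
      simpa using (((hasDerivAt_id s).mul_const β).const_add α)
    exact hlin.congr_of_eventuallyEq hev

lemma reluSlope_measurable (α β : ℝ) : Measurable (reluSlope α β) := by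
  unfold reluSlope
  apply Measurable.ite
  · exact measurableSet_lt measurable_const (by fun_prop)
  · exact measurable_const
  apply Measurable.ite
  · exact measurableSet_eq_fun (by fun_prop) measurable_const
  · exact measurable_const
  · exact measurable_const

lemma oneD {K : ℕ} (a α β : Fin K → ℝ) (c L : ℝ) (hL : 0 ≤ L)
    (hae : ∀ᵐ s : ℝ, s ∈ Icc 0 L →
      HasDerivAt (fun t => (∑ k, a k * max (α k + t * β k) 0) + c) 0 s) :
    (∑ k, a k * max (α k + L * β k) 0) + c = (∑ k, a k * max (α k + 0 * β k) 0) + c := by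
  set φ : ℝ → ℝ := fun t => (∑ k, a k * max (α k + t * β k) 0) + c with hφ
  set Φ : ℝ → ℝ := fun s => ∑ k, a k * reluSlope (α k) (β k) s with hΦ
  have hΦw : ∀ s, HasDerivWithinAt φ (Φ s) (Ici s) s := by
    intro s
    exact (HasDerivWithinAt.fun_sum fun k _ =>
      (relu_hasDerivWithinAt (α k) (β k) s).const_mul (a k)).add_const c
  have hcont : Continuous φ := by
    apply Continuous.add _ continuous_const
    apply continuous_finset_sum
    intro k _
    exact continuous_const.mul ((continuous_const.add (continuous_id.mul continuous_const)).max
      continuous_const)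
  have hΦm : Measurable Φ := by
    apply Finset.measurable_sum
    intro k _
    exact (reluSlope_measurable (α k) (β k)).const_mul (a k)
  have hΦint : IntervalIntegrable Φ volume 0 L := by
    rw [intervalIntegrable_iff]
    apply MeasureTheory.Integrable.mono' (g := fun _ => ∑ k, |a k| * |β k|)
      (integrableOn_const measure_Ioc_lt_top.ne)
      (hΦm.aestronglyMeasurable.restrict)
    filter_upwards with s
    calc ‖Φ s‖ ≤ ∑ k, ‖a k * reluSlope (α k) (β k) s‖ := norm_sum_le _ _
      _ ≤ ∑ k, |a k| * |β k| := by
          apply Finset.sum_le_sum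
          intro k _
          rw [Real.norm_eq_abs, abs_mul]
          exact mul_le_mul_of_nonneg_left (reluSlope_abs_le _ _ _) (abs_nonneg _)
  have hFTC : ∫ s in (0:ℝ)..L, Φ s = φ L - φ 0 :=
    intervalIntegral.integral_eq_sub_of_hasDeriv_right_of_le hL
      hcont.continuousOn (fun x _ => (hΦw x).mono Ioi_subset_Ici_self) hΦint
  have hB : ∀ᵐ s : ℝ, ∀ k, β k = 0 ∨ α k + s * β k ≠ 0 := by
    have : ∀ k : Fin K, ∀ᵐ s : ℝ, β k = 0 ∨ α k + s * β k ≠ 0 := by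
      intro k
      rcases eq_or_ne (β k) 0 with h | h
      · filter_upwards with s; exact Or.inl h
      · have hsub : {s : ℝ | ¬(β k = 0 ∨ α k + s * β k ≠ 0)}.Subsingleton := by
          intro s₁ hs₁ s₂ hs₂
          simp only [mem_setOf_eq, not_or, not_ne_iff] at hs₁ hs₂
          have h12 : s₁ * β k = s₂ * β k := by linarith [hs₁.2, hs₂.2]
          exact mul_right_cancel₀ h h12
        have := hsub.measure_zero (volume : Measure ℝ)
        exact (ae_iff).2 this
    exact (ae_all_iff).2 this
  have hΦ0 : ∀ᵐ s : ℝ, s ∈ Set.uIoc (0:ℝ) L → Φ s = 0 := by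
    filter_upwards [hae, hB] with s hs hb hmem
    have hsIcc : s ∈ Icc 0 L := by
      rw [Set.uIoc_of_le hL] at hmem
      exact ⟨hmem.1.le, hmem.2⟩
    have h1 : HasDerivAt φ (Φ s) s :=
      (HasDerivAt.fun_sum fun k _ =>
        (relu_hasDerivAt (α k) (β k) s (hb k)).const_mul (a k)).add_const c
    exact h1.unique (hs hsIcc)
  have : ∫ s in (0:ℝ)..L, Φ s = 0 := by
    rw [intervalIntegral.integral_congr_ae hΦ0]
    simp
  have : φ L = φ 0 := by linarith [hFTC ▸ this]
  simpa [hφ] using this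

abbrev Euc' (d : ℕ) : Type := EuclideanSpace ℝ (Fin d)

lemma ae_line_null {d : ℕ} (u : Euc' d) (N : Set (Euc' d)) (hNm : MeasurableSet N)
    (hN : volume N = 0) :
    ∀ᵐ z : Euc' d, volume {s : ℝ | z + s • u ∈ N} = 0 := by
  have hcontmap : Continuous fun p : Euc' d × ℝ => p.1 + p.2 • u :=
    continuous_fst.add (continuous_snd.smul continuous_const)
  set A : Set (Euc' d × ℝ) := (fun p : Euc' d × ℝ => p.1 + p.2 • u) ⁻¹' N with hA
  have hAm : MeasurableSet A := hcontmap.measurable hNm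
  set A' : Set (ℝ × Euc' d) := (fun p : ℝ × Euc' d => p.2 + p.1 • u) ⁻¹' N with hA'
  have hA'm : MeasurableSet A' :=
    (continuous_snd.add (continuous_fst.smul continuous_const)).measurable hNm
  have hswap : A = Prod.swap ⁻¹' A' := rfl
  have hA'null : (volume.prod volume : Measure (ℝ × Euc' d)) A' = 0 := by
    rw [MeasureTheory.Measure.prod_apply hA'm]
    have : ∀ s : ℝ, (volume : Measure (Euc' d)) (Prod.mk s ⁻¹' A') = 0 := by
      intro s
      have hpre : Prod.mk s ⁻¹' A' = (fun z : Euc' d => z + s • u) ⁻¹' N := rfl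
      rw [hpre]
      have : (fun z : Euc' d => z + s • u) ⁻¹' N = (fun z : Euc' d => s • u + z) ⁻¹' N := by
        ext z; simp [add_comm]
      rw [this, measure_preimage_add]
      exact hN
    simp [this]
  have hAnull : (volume.prod volume : Measure (Euc' d × ℝ)) A = 0 := by
    rw [hswap, ← MeasureTheory.Measure.map_apply measurable_swap hA'm,
      MeasureTheory.Measure.prod_swap]
    exact hA'null
  have := (MeasureTheory.Measure.measure_prod_null hAm).1 hAnull
  filter_upwards [this] with z hz
  exact hz

end AuxLemmas

open MeasureTheory Set in
/-- if a two-layer ReLU network `f` on a convex set `X` with nonempty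
interior has, for Lebesgue-a.e. `x ∈ X`, derivative orthogonal to `u`, then
`f(x + u) = f(x)` whenever `x, x + u ∈ X`. -/
theorem constant_along_ae_null_direction {d K : ℕ} (X : Set (Euc d))
    (hconv : Convex ℝ X) (hint : (interior X).Nonempty)
    (a : Fin K → ℝ) (w : Fin K → Euc d) (b : Fin K → ℝ) (c : ℝ)
    (f : Euc d → ℝ)
    (hf : ∀ x ∈ X, f x = (∑ k, a k * relu ((∑ i, w k i * x i) + b k)) + c)
    (u : Euc d)
    (hgrad : ∀ᵐ x : Euc d, x ∈ X →
      DifferentiableAt ℝ f x ∧ (∑ i, gradient f x i * u i) = 0) :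
    ∀ x ∈ X, x + u ∈ X → f (x + u) = f x := by

  classical
  intro x hx hxu
  set g : Euc d → ℝ := fun p => (∑ k, a k * relu ((∑ i, w k i * p i) + b k)) + c with hg
  have hfg : ∀ p ∈ X, f p = g p := fun p hp => hf p hp
  have hgc : Continuous g := by
    rw [hg]
    simp only [relu]
    apply Continuous.add _ continuous_const
    apply continuous_finset_sum
    intro k _
    apply continuous_const.mul
    apply Continuous.max _ continuous_const
    apply Continuous.add _ continuous_const
    exact continuous_finset_sum _ fun i _ =>
      continuous_const.mul (EuclideanSpace.proj (𝕜 := ℝ) i).continuous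
  -- transfer hypothesis to g
  have hP : ∀ᵐ p : Euc d, p ∈ interior X →
      (DifferentiableAt ℝ g p ∧ (∑ i, gradient g p i * u i) = 0) := by
    filter_upwards [hgrad] with p hp hpint
    have hmemX : X ∈ nhds p :=
      Filter.mem_of_superset (isOpen_interior.mem_nhds hpint) interior_subset
    have hev : f =ᶠ[nhds p] g := by
      filter_upwards [hmemX] with q hq
      exact hfg q hq
    obtain ⟨hdiff, hzero⟩ := hp (interior_subset hpint)
    have hgrad_eq : gradient g p = gradient f p := by
      simp only [gradient]
      rw [hev.fderiv_eq]
    refine ⟨(hev.differentiableAt_iff).1 hdiff, ?_⟩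
    rw [hgrad_eq]
    exact hzero
  obtain ⟨N, hNsub, hNm, hNnull⟩ := exists_measurable_superset_of_null (ae_iff.1 hP)
  have hGnull : volume {z : Euc d | ¬ volume {s : ℝ | z + s • u ∈ N} = 0} = 0 :=
    ae_iff.1 (ae_line_null u N hNm hNnull)
  obtain ⟨y, hy⟩ := hint
  obtain ⟨r, hr0, hball⟩ := Metric.isOpen_iff.1 isOpen_interior y hy
  -- key step
  have key : ∀ t ∈ Set.Ioo (0:ℝ) 1, ∃ z : Euc d,
      dist z ((1 - t) • x + t • y) < t * r ∧ g (z + (1 - t) • u) = g z := by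
    intro t ht
    set ctr : Euc d := (1 - t) • x + t • y with hctr
    have htr : 0 < t * r := mul_pos ht.1 hr0
    have hpos : 0 < volume (Metric.ball ctr (t * r)) := Metric.measure_ball_pos _ _ htr
    have hexz : ∃ z ∈ Metric.ball ctr (t * r), volume {s : ℝ | z + s • u ∈ N} = 0 := by
      by_contra hcon
      push_neg at hcon
      have hsub : Metric.ball ctr (t * r) ⊆
          {z : Euc d | ¬ volume {s : ℝ | z + s • u ∈ N} = 0} := fun z hz => hcon z hz
      exact absurd (le_antisymm (le_trans (measure_mono hsub) (le_of_eq hGnull))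
        zero_le) hpos.ne'
    obtain ⟨z, hzball, hzG⟩ := hexz
    set y' : Euc d := y + t⁻¹ • (z - ctr) with hy'
    have hty' : z = (1 - t) • x + t • y' := by
      rw [hy', smul_add, smul_smul, mul_inv_cancel₀ ht.1.ne', one_smul, hctr]
      abel
    have hy'ball : y' ∈ Metric.ball y r := by
      rw [hy', Metric.mem_ball, dist_eq_norm, add_sub_cancel_left, norm_smul,
        Real.norm_eq_abs, abs_of_pos (inv_pos.2 ht.1)]
      have hz' : ‖z - ctr‖ < t * r := by rwa [Metric.mem_ball, dist_eq_norm] at hzball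
      calc t⁻¹ * ‖z - ctr‖ < t⁻¹ * (t * r) :=
            mul_lt_mul_of_pos_left hz' (inv_pos.2 ht.1)
        _ = r := inv_mul_cancel_left₀ ht.1.ne' r
    have hy'int : y' ∈ interior X := hball hy'ball
    clear_value y' ctr
    set L : ℝ := 1 - t with hLdef
    have hL0 : 0 < L := by rw [hLdef]; linarith [ht.2]
    have hzint : z ∈ interior X := by
      rw [hty']
      exact hconv.combo_self_interior_mem_interior hx hy'int hL0.le ht.1
        (by rw [hLdef]; ring)
    have hzLint : z + L • u ∈ interior X := by
      have heq : z + L • u = L • (x + u) + t • y' := by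
        rw [hty', smul_add]; abel
      rw [heq]
      exact hconv.combo_self_interior_mem_interior hxu hy'int hL0.le ht.1
        (by rw [hLdef]; ring)
    have hseg : ∀ s ∈ Set.Icc (0:ℝ) L, z + s • u ∈ interior X := by
      intro s hs
      have h1 : (0:ℝ) ≤ 1 - s / L := by
        have : s / L ≤ 1 := (div_le_one hL0).2 hs.2
        linarith
      have h2 : (0:ℝ) ≤ s / L := div_nonneg hs.1 hL0.le
      have hcomb := hconv.interior hzint hzLint h1 h2 (by ring)
      have heq : (1 - s / L) • z + (s / L) • (z + L • u) = z + s • u := by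
        rw [smul_add, smul_smul, div_mul_cancel₀ s hL0.ne', ← add_assoc,
          ← add_smul]
        norm_num
      rwa [heq] at hcomb
    set αk : Fin K → ℝ := fun k => (∑ i, w k i * z i) + b k with hαk
    set βk : Fin K → ℝ := fun k => ∑ i, w k i * u i with hβk
    have hφeq : ∀ s : ℝ, g (z + s • u) = (∑ k, a k * max (αk k + s * βk k) 0) + c := by
      intro s
      rw [hg]
      simp only [relu]
      congr 1
      apply Finset.sum_congr rfl
      intro k _
      congr 2
      have happ : ∀ i, (z + s • u) i = z i + s * u i := by
        intro i
        simp [PiLp.add_apply, PiLp.smul_apply, smul_eq_mul]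
      rw [hαk, hβk]
      simp only [happ, mul_add, Finset.sum_add_distrib, Finset.mul_sum]
      have hsw : ∀ i, w k i * (s * u i) = s * (w k i * u i) := fun i => by ring
      simp only [hsw]
      ring
    have hae1 : ∀ᵐ s : ℝ, s ∈ Set.Icc 0 L →
        HasDerivAt (fun σ => (∑ k, a k * max (αk k + σ * βk k) 0) + c) 0 s := by
      have hzaem : ∀ᵐ s : ℝ, z + s • u ∉ N := by
        rw [ae_iff]
        simpa using hzG
      filter_upwards [hzaem] with s hsN hsIcc
      have hpint : z + s • u ∈ interior X := hseg s hsIcc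
      have hPp : DifferentiableAt ℝ g (z + s • u) ∧
          (∑ i, gradient g (z + s • u) i * u i) = 0 := by
        by_contra hcon
        exact hsN (hNsub (fun himp => hcon (himp hpint)))
      obtain ⟨hdiff, hzero⟩ := hPp
      have hline : HasDerivAt (fun σ : ℝ => z + σ • u) u s := by
        have h1 : HasDerivAt (fun σ : ℝ => σ • u) ((1:ℝ) • u) s :=
          (hasDerivAt_id s).smul_const u
        simpa using h1.const_add z
      have hcomp : HasDerivAt (fun σ : ℝ => g (z + σ • u))
          (fderiv ℝ g (z + s • u) u) s :=
        by have := hdiff.hasFDerivAt.comp_hasDerivAt s hline; exact this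
      have hfd : fderiv ℝ g (z + s • u) u = 0 := by
        have h1 : inner ℝ (gradient g (z + s • u)) u = fderiv ℝ g (z + s • u) u := by
          simp only [gradient]
          exact InnerProductSpace.toDual_symm_apply
        rw [← h1]
        rw [PiLp.inner_apply]
        simpa [RCLike.inner_apply, conj_trivial, mul_comm] using hzero
      have hfun : (fun σ : ℝ => g (z + σ • u)) =
          fun σ => (∑ k, a k * max (αk k + σ * βk k) 0) + c := funext hφeq
      rw [← hfun]
      rw [hfd] at hcomp
      exact hcomp
    have h1D := oneD a αk βk c L hL0.le hae1
    refine ⟨z, by rwa [Metric.mem_ball] at hzball, ?_⟩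
    have e1 : g (z + L • u) = g (z + (0:ℝ) • u) := by
      rw [hφeq, hφeq]
      exact h1D
    simpa using e1
  -- limit argument
  set t : ℕ → ℝ := fun n => 1 / (n + 2) with htdef
  have htmem : ∀ n : ℕ, t n ∈ Set.Ioo (0:ℝ) 1 := by
    intro n
    constructor
    · positivity
    · rw [htdef]
      rw [div_lt_one (by positivity)]
      have : (0:ℝ) ≤ (n:ℝ) := Nat.cast_nonneg n
      linarith
  choose z hz1 hz2 using fun n => key (t n) (htmem n)
  have htend0 : Filter.Tendsto t Filter.atTop (nhds 0) := by
    have h2 : Filter.Tendsto (fun n : ℕ => ((n:ℝ) + 2)) Filter.atTop Filter.atTop :=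
      Filter.tendsto_atTop_add_const_right _ 2 tendsto_natCast_atTop_atTop
    have := h2.inv_tendsto_atTop
    simpa [htdef, one_div, Pi.inv_def] using this
  have hzx : Filter.Tendsto z Filter.atTop (nhds x) := by
    rw [tendsto_iff_dist_tendsto_zero]
    apply squeeze_zero (fun n => dist_nonneg) (g := fun n => t n * (r + dist y x))
    · intro n
      have hd1 : dist (z n) ((1 - t n) • x + t n • y) ≤ t n * r := (hz1 n).le
      have hd2 : dist ((1 - t n) • x + t n • y) x = t n * dist y x := by
        rw [dist_eq_norm]
        have heq : (1 - t n) • x + t n • y - x = t n • (y - x) := by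
          rw [smul_sub, sub_smul, one_smul]; abel
        rw [heq, norm_smul, Real.norm_eq_abs, abs_of_pos (htmem n).1, dist_eq_norm]
      calc dist (z n) x ≤ dist (z n) ((1 - t n) • x + t n • y) +
            dist ((1 - t n) • x + t n • y) x := dist_triangle _ _ _
        _ ≤ t n * r + t n * dist y x := by rw [hd2]; linarith
        _ = t n * (r + dist y x) := by ring
    · have h := htend0.mul_const (r + dist y x)
      rw [zero_mul] at h
      exact h
  have hzu : Filter.Tendsto (fun n => z n + (1 - t n) • u) Filter.atTop (nhds (x + u)) := by
    have h2 : Filter.Tendsto (fun n => (1 - t n : ℝ)) Filter.atTop (nhds 1) := by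
      simpa using (tendsto_const_nhds.sub htend0)
    have h3 := hzx.add (h2.smul_const u)
    simpa using h3
  have hgz : Filter.Tendsto (fun n => g (z n)) Filter.atTop (nhds (g x)) :=
    (hgc.tendsto x).comp hzx
  have hgzu : Filter.Tendsto (fun n => g (z n + (1 - t n) • u)) Filter.atTop
      (nhds (g (x + u))) := (hgc.tendsto (x + u)).comp hzu
  have hgeq : g (x + u) = g x := by
    apply tendsto_nhds_unique _ hgz
    have hfun : (fun n => g (z n + (1 - t n) • u)) = fun n => g (z n) := funext hz2
    rw [← hfun]
    exact hgzu
  rw [hfg x hx, hfg (x + u) hxu]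
  exact hgeq
end

section
/- Let X ⊆ ℝ^d be a convex set with nonempty interior and suppose f(x) = Σ_{k=1}^K a_k [w_kᵀ x + b_k]_+ + vᵀx + c for all x ∈ X, where each w_k ≠ 0, the hyperplanes H_k = {x ∈ ℝ^d : w_kᵀ x + b_k = 0} are pairwise distinct, and each H_k intersects the interior of X. Then v ∈ range(Σ_ρ(f)), and w_k ∈ range(Σ_ρ(f)) for every k such that a_k ≠ 0. -/
open MeasureTheory Matrix

noncomputable section

/-- Widths of an `L`-layer network: layer `0` (the input) has width `d`,
and hidden layer `i+1` has width `m i`. -/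
def layerWidth (d : ℕ) (m : ℕ → ℕ) : ℕ → ℕ
  | 0 => d
  | i + 1 => m i

/-- An `L`-layer parameterization `θ = (W_1, …, W_{L-1}, a, b, c)` of arbitrary widths. -/
structure DeepParams (d L : ℕ) where
  m : ℕ → ℕ
  W : (i : Fin (L - 1)) → Matrix (Fin (layerWidth d m (i.1 + 1))) (Fin (layerWidth d m i.1)) ℝ
  a : Fin (layerWidth d m (L - 1)) → ℝ
  b : Fin (layerWidth d m (L - 1)) → ℝ
  c : ℝ

/-- The product `W_j ⋯ W_2 W_1` of the first `j` linear layers. -/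
def DeepParams.prodW {d L : ℕ} (θ : DeepParams d L) :
    (j : ℕ) → j ≤ L - 1 → Matrix (Fin (layerWidth d θ.m j)) (Fin d) ℝ
  | 0, _ => (1 : Matrix (Fin d) (Fin d) ℝ)
  | j + 1, h => θ.W ⟨j, by omega⟩ * θ.prodW j (by omega)

/-- The function `h_θ^{(L)}(x) = aᵀ [W_{L-1} ⋯ W_1 x + b]_+ + c`. -/
def DeepParams.fwd {d L : ℕ} (θ : DeepParams d L) (x : Euc d) : ℝ :=
  (∑ k, θ.a k * relu ((θ.prodW (L - 1) le_rfl).mulVec x k + θ.b k)) + θ.c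

/-- The cost `C_L(θ) = (1/L)(‖a‖₂² + ‖W_1‖_F² + ⋯ + ‖W_{L-1}‖_F²)`. -/
def DeepParams.cost {d L : ℕ} (θ : DeepParams d L) : ℝ :=
  (1 / (L : ℝ)) * ((∑ k, θ.a k ^ 2) + ∑ i : Fin (L - 1), ∑ p, ∑ q, θ.W i p q ^ 2)

/-- The representation cost `R_L(f)`. -/
def repCost {d : ℕ} (X : Set (Euc d)) (L : ℕ) (f : Euc d → ℝ) : ℝ :=
  sInf { r | ∃ θ : DeepParams d L, (∀ x ∈ X, θ.fwd x = f x) ∧ r = θ.cost }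

/-- Membership in `N(X)`: `f` is expressible on `X` as a two-layer ReLU network. -/
def MemN {d : ℕ} (X : Set (Euc d)) (f : Euc d → ℝ) : Prop :=
  ∃ (K : ℕ) (W : Matrix (Fin K) (Fin d) ℝ) (a b : Fin K → ℝ) (c : ℝ),
    ∀ x ∈ X, f x = (∑ k, a k * relu (W.mulVec x k + b k)) + c

/-- `X` is either a bounded convex set with nonempty interior, or all of `ℝ^d`. -/
def GoodDomain {d : ℕ} (X : Set (Euc d)) : Prop :=
  (Bornology.IsBounded X ∧ Convex ℝ X ∧ (interior X).Nonempty) ∨ X = Set.univ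

/-- `ρ` is a probability density, strictly positive on `X` and vanishing outside `X`. -/
def IsDensityOn {d : ℕ} (X : Set (Euc d)) (ρ : Euc d → ℝ) : Prop :=
  Measurable ρ ∧ (∀ x ∈ X, 0 < ρ x) ∧ (∀ x ∉ X, ρ x = 0) ∧ (∫ x, ρ x) = 1

/-- The gradient covariance matrix `Σ_ρ(f) = ∫ ∇f(x) ∇f(x)ᵀ ρ(x) dx`. -/
def gradCov {d : ℕ} (ρ : Euc d → ℝ) (f : Euc d → ℝ) : Matrix (Fin d) (Fin d) ℝ :=
  Matrix.of fun i j => ∫ x, gradient f x i * gradient f x j * ρ x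

lemma gradCov_isHermitian {d : ℕ} (ρ : Euc d → ℝ) (f : Euc d → ℝ) :
    (gradCov ρ f).IsHermitian := by
  show (gradCov ρ f)ᴴ = gradCov ρ f
  ext i j
  simp only [Matrix.conjTranspose_apply, star_trivial, gradCov, Matrix.of_apply]
  congr 1
  funext x
  ring

/-- The eigenvalues of a hermitian matrix, sorted in decreasing order:
`eigsDesc M hM k` is the `(k+1)`-st largest eigenvalue of `M`. -/
def eigsDesc {n : ℕ} (M : Matrix (Fin n) (Fin n) ℝ) (hM : M.IsHermitian) : Fin n → ℝ :=
  fun k => (hM.eigenvalues ∘ Tuple.sort hM.eigenvalues) k.rev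

/-- `σ_{k+1}(f) = λ_{k+1}(Σ_ρ(f))^{1/2}`, the `(k+1)`-st largest singular value of `f`
(indexed from `0`). -/
def funcSingVal {d : ℕ} (ρ : Euc d → ℝ) (f : Euc d → ℝ) (k : Fin d) : ℝ :=
  Real.sqrt (eigsDesc (gradCov ρ f) (gradCov_isHermitian ρ f) k)

/-- The mixed variation `MV_q(f) = (Σ_k σ_k(f)^q)^{1/q}`. -/
def mixedVar {d : ℕ} (ρ : Euc d → ℝ) (f : Euc d → ℝ) (q : ℝ) : ℝ :=
  (∑ k, funcSingVal ρ f k ^ q) ^ (1 / q)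

end

section AuxHelpers



lemma inner_eq_sumMul {d : ℕ} (u x : Euc d) : inner (𝕜 := ℝ) u x = ∑ i, u i * x i := by
  simp [PiLp.inner_apply, RCLike.inner_apply, conj_trivial]
  exact Finset.sum_congr rfl fun i _ => mul_comm _ _

lemma sumMul_continuous {d : ℕ} (u : Euc d) (b : ℝ) :
    Continuous (fun x : Euc d => (∑ i, u i * x i) + b) := by
  have : (fun x : Euc d => (∑ i, u i * x i) + b) = fun x => (innerSL ℝ u) x + b := by
    funext x; simp [inner_eq_sumMul]
  rw [this]
  exact ((innerSL ℝ u).continuous).add continuous_const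

lemma affine_hasGradientAt {d : ℕ} (g : Euc d) (C : ℝ) (x : Euc d) :
    HasGradientAt (fun y : Euc d => (∑ i, g i * y i) + C) g x := by
  rw [hasGradientAt_iff_hasFDerivAt]
  have h : (fun y : Euc d => (∑ i, g i * y i) + C)
      = fun y => (InnerProductSpace.toDual ℝ (Euc d) g) y + C := by
    funext y; simp [InnerProductSpace.toDual_apply_apply, inner_eq_sumMul]
  rw [h]
  exact ((InnerProductSpace.toDual ℝ (Euc d) g).hasFDerivAt).add_const C

lemma hyperplane_null {d : ℕ} (u : Euc d) (hu : u ≠ 0) (b : ℝ) :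
    volume {x : Euc d | (∑ i, u i * x i) + b = 0} = 0 := by
  classical
  set φ : Euc d →ₗ[ℝ] ℝ := (innerSL ℝ u).toLinearMap with hφ
  have hφap : ∀ x, φ x = ∑ i, u i * x i := fun x => inner_eq_sumMul u x
  -- pick x₀ with φ x₀ = -b
  have hnorm : φ u ≠ 0 := by
    rw [hφap]
    have : (0:ℝ) < ∑ i, u i * u i := by
      obtain ⟨i, hi⟩ : ∃ i, u i ≠ 0 := by
        by_contra hc; push_neg at hc; exact hu (PiLp.ext fun i => by simp [hc i])
      apply Finset.sum_pos' (fun j _ => mul_self_nonneg _)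
      exact ⟨i, Finset.mem_univ i, mul_self_pos.mpr hi⟩
    linarith
  set x₀ : Euc d := (-b / φ u) • u with hx₀
  have hφx₀ : φ x₀ = -b := by
    rw [hx₀, φ.map_smul, smul_eq_mul, div_mul_cancel₀ _ hnorm]
  have hker : LinearMap.ker φ ≠ ⊤ := by
    intro h
    have : u ∈ LinearMap.ker φ := h ▸ Submodule.mem_top
    exact hnorm this
  have hset : {x : Euc d | (∑ i, u i * x i) + b = 0}
      = (fun h => h + (-x₀)) ⁻¹' (LinearMap.ker φ : Set (Euc d)) := by
    ext x
    simp only [Set.mem_setOf_eq, Set.mem_preimage, SetLike.mem_coe, LinearMap.mem_ker,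
      map_add, map_neg, hφx₀, ← hφap x]
    constructor <;> intro h <;> linarith
  rw [hset, measure_preimage_add_right]
  exact Measure.addHaar_submodule volume _ hker



lemma symm_matrix_mem_range {d : ℕ} (M : Matrix (Fin d) (Fin d) ℝ)
    (hsymm : ∀ i j, M i j = M j i) (v : Euc d)
    (hv : ∀ z : Euc d, M.mulVec z = 0 → ∑ i, z i * v i = 0) :
    ∃ z : Fin d → ℝ, M.mulVec z = v := by
  classical
  set T : Euc d →ₗ[ℝ] Euc d :=
    { toFun := fun x => WithLp.toLp 2 (M.mulVec x)
      map_add' := fun x y => by simp [Matrix.mulVec_add]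
      map_smul' := fun c x => by simp [Matrix.mulVec_smul] } with hT
  have hTap : ∀ x : Euc d, T x = M.mulVec x := fun _ => rfl
  have hsym : ∀ x y : Euc d, inner (𝕜 := ℝ) (T x) y = inner (𝕜 := ℝ) x (T y) := by
    intro x y
    simp only [PiLp.inner_apply, RCLike.inner_apply, conj_trivial, hTap,
      Matrix.mulVec, dotProduct]
    simp only [Finset.sum_mul, Finset.mul_sum]
    rw [Finset.sum_comm]
    apply Finset.sum_congr rfl; intro i _
    apply Finset.sum_congr rfl; intro j _
    rw [hsymm j i]; ring
  have hrange : LinearMap.range T = (LinearMap.ker T)ᗮ := by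
    apply Submodule.eq_of_le_of_finrank_eq
    · rintro _ ⟨x, rfl⟩
      rw [Submodule.mem_orthogonal]
      intro u hu
      rw [← hsym, LinearMap.mem_ker.mp hu, inner_zero_left]
    · have h1 := LinearMap.finrank_range_add_finrank_ker T
      have h2 := Submodule.finrank_add_finrank_orthogonal (𝕜 := ℝ) (LinearMap.ker T)
      omega
  have hvmem : v ∈ (LinearMap.ker T)ᗮ := by
    rw [Submodule.mem_orthogonal]
    intro u hu
    have := hv u (by rw [← hTap, LinearMap.mem_ker.mp hu]; rfl)
    rw [PiLp.inner_apply]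
    simpa [RCLike.inner_apply, conj_trivial, mul_comm] using this
  rw [← hrange] at hvmem
  obtain ⟨z, hz⟩ := hvmem
  exact ⟨z, by rw [← hTap, hz]⟩



lemma sumMul_self_pos {d : ℕ} {u : Euc d} (hu : u ≠ 0) : (0:ℝ) < ∑ i, u i * u i := by
  obtain ⟨i, hi⟩ : ∃ i, u i ≠ 0 := by
    by_contra hc; push_neg at hc; exact hu (PiLp.ext fun i => by simp [hc i])
  apply Finset.sum_pos' (fun j _ => mul_self_nonneg _)
  exact ⟨i, Finset.mem_univ i, mul_self_pos.mpr hi⟩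

lemma exists_point_on_one_hyperplane {d K : ℕ} (X : Set (Euc d))
    (w : Fin K → Euc d) (b : Fin K → ℝ) (hw : ∀ k, w k ≠ 0)
    (hdist : ∀ j k : Fin K, j ≠ k →
      {x : Euc d | (∑ i, w j i * x i) + b j = 0} ≠ {x : Euc d | (∑ i, w k i * x i) + b k = 0})
    (k : Fin K)
    (hq : ({x : Euc d | (∑ i, w k i * x i) + b k = 0} ∩ interior X).Nonempty) :
    ∃ p ∈ interior X, ((∑ i, w k i * p i) + b k = 0) ∧
      ∀ j, j ≠ k → (∑ i, w j i * p i) + b j ≠ 0 := by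
  classical
  obtain ⟨q, hqH, hqX⟩ := hq
  set φ : Fin K → (Euc d →ₗ[ℝ] ℝ) := fun j => (innerSL ℝ (w j)).toLinearMap with hφdef
  have hφap : ∀ j x, φ j x = ∑ i, w j i * x i := fun j x => inner_eq_sumMul (w j) x
  have hφne : ∀ j, φ j ≠ 0 := by
    intro j hj
    have : φ j (w j) = 0 := by rw [hj]; rfl
    rw [hφap] at this
    exact absurd this (ne_of_gt (sumMul_self_pos (hw j)))
  have hqHk : φ k q + b k = 0 := by rw [hφap]; exact hqH
  -- the "bad" indices: other hyperplanes through q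
  set J : Finset (Fin K) := Finset.univ.filter (fun j => j ≠ k ∧ φ j q + b j = 0) with hJ
  -- find u in ker (φ k) avoiding ker (φ j) for j ∈ J
  have hu : ∃ u : Euc d, φ k u = 0 ∧ ∀ j ∈ J, φ j u ≠ 0 := by
    by_contra hc
    push_neg at hc
    -- the subspaces (ker φ j ⊓ ker φ k), viewed inside V := ker (φ k), cover V
    set V : Submodule ℝ (Euc d) := LinearMap.ker (φ k) with hV
    have hcover : ⋃ j : J, ((LinearMap.ker (φ j.1)).comap V.subtype : Set V) = Set.univ := by
      ext ⟨u, hu⟩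
      simp only [Set.mem_iUnion, Set.mem_univ, iff_true]
      obtain ⟨j, hjJ, hju⟩ := hc u (LinearMap.mem_ker.mp hu)
      exact ⟨⟨j, hjJ⟩, by simpa [Submodule.mem_comap] using hju⟩
    obtain ⟨⟨j, hjJ⟩, hjtop⟩ := Subspace.exists_eq_top_of_iUnion_eq_univ hcover
    have hjk : j ≠ k := (Finset.mem_filter.mp hjJ).2.1
    have hjq : φ j q + b j = 0 := (Finset.mem_filter.mp hjJ).2.2
    -- ker φ k ≤ ker φ j
    have hker : LinearMap.ker (φ k) ≤ LinearMap.ker (φ j) := by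
      intro x hx
      have : (⟨x, hx⟩ : V) ∈ (LinearMap.ker (φ j)).comap V.subtype := by
        rw [hjtop]; trivial
      simpa [Submodule.mem_comap] using this
    -- hence φ j = c • φ k for some c ≠ 0
    have hinf : (⨅ _ : Fin 1, LinearMap.ker (φ k)) ≤ LinearMap.ker (φ j) := by
      simpa using hker
    have hspan := FiniteDimensional.mem_span_of_iInf_ker_le_ker hinf
    rw [Set.range_const] at hspan
    obtain ⟨c, hc'⟩ := Submodule.mem_span_singleton.mp hspan
    have hcne : c ≠ 0 := by
      rintro rfl; rw [zero_smul] at hc'; exact hφne j hc'.symm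
    have hbj : b j = c * b k := by
      have h1 : φ j q = c * φ k q := by rw [← hc']; rfl
      have h3 : b j = -φ j q := by linarith
      have h4 : φ k q = -b k := by linarith
      rw [h3, h1, h4]; ring
    -- the two hyperplanes coincide; contradiction
    apply hdist j k hjk
    ext x
    simp only [Set.mem_setOf_eq, ← hφap]
    have h2 : φ j x = c * φ k x := by rw [← hc']; rfl
    rw [h2, hbj, ← mul_add]
    constructor
    · intro h
      rcases mul_eq_zero.mp h with h' | h'
      · exact absurd h' hcne
      · exact h'
    · intro h; rw [h, mul_zero]
  obtain ⟨u, huk, huJ⟩ := hu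
  -- pick a small t ≠ 0 with q + t • u in the interior and off the other hyperplanes
  set W : Set (Euc d) := interior X ∩
      ⋂ j ∈ Finset.univ.filter (fun j : Fin K => j ≠ k ∧ φ j q + b j ≠ 0),
        {x : Euc d | (∑ i, w j i * x i) + b j ≠ 0} with hW
  have hWopen : IsOpen W := by
    apply isOpen_interior.inter
    apply isOpen_biInter_finset
    intro j _
    exact isOpen_compl_iff.mpr ((isClosed_singleton (x := (0:ℝ))).preimage (sumMul_continuous (w j) (b j)))
  have hqW : q ∈ W := by
    refine ⟨hqX, ?_⟩
    simp only [Set.mem_iInter]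
    intro j hj
    exact (Finset.mem_filter.mp hj).2.2 ∘ (fun h => by rwa [hφap])
  have hcont : Continuous (fun t : ℝ => q + t • u) := continuous_const.add (continuous_id.smul continuous_const)
  have hev : ∀ᶠ t in nhds (0:ℝ), q + t • u ∈ W := by
    have h0 : q + (0:ℝ) • u = q := by simp
    have := hcont.tendsto 0
    rw [h0] at this
    exact this.eventually (hWopen.mem_nhds hqW)
  obtain ⟨δ, hδpos, hδ⟩ := Metric.eventually_nhds_iff.mp hev
  set t : ℝ := δ / 2 with ht
  have htpos : t ≠ 0 := by positivity
  have htW : q + t • u ∈ W := by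
    apply hδ
    simp only [Real.dist_eq, sub_zero, ht, abs_of_pos (by positivity : (0:ℝ) < δ/2)]
    linarith
  refine ⟨q + t • u, htW.1, ?_, ?_⟩
  · rw [← hφap]
    simp only [map_add, LinearMap.map_smul, smul_eq_mul, huk, mul_zero]
    rw [add_zero]
    exact hqHk
  · intro j hjk
    rw [← hφap]
    by_cases hjq : φ j q + b j = 0
    · have hjJ : j ∈ J := Finset.mem_filter.mpr ⟨Finset.mem_univ j, hjk, hjq⟩
      have := huJ j hjJ
      simp only [map_add, LinearMap.map_smul, smul_eq_mul]
      intro hcon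
      apply this
      have : t * φ j u = 0 := by linarith
      rcases mul_eq_zero.mp this with h | h
      · exact absurd h htpos
      · exact h
    · have := htW.2
      simp only [Set.mem_iInter] at this
      have := this j (Finset.mem_filter.mpr ⟨Finset.mem_univ j, hjk, hjq⟩)
      rw [hφap]; exact this

end AuxHelpers

/-- weights of a canonical-form network lie in the range of the gradient
covariance matrix `Σ_ρ(f)`. -/
theorem weights_mem_range_gradCov {d K : ℕ} (X : Set (Euc d)) (ρ : Euc d → ℝ)
    (hconv : Convex ℝ X) (hint : (interior X).Nonempty) (hρ : IsDensityOn X ρ)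
    (a : Fin K → ℝ) (w : Fin K → Euc d) (b : Fin K → ℝ) (v : Euc d) (c : ℝ)
    (f : Euc d → ℝ)
    (hf : ∀ x ∈ X, f x =
      (∑ k, a k * relu ((∑ i, w k i * x i) + b k)) + (∑ i, v i * x i) + c)
    (hw : ∀ k, w k ≠ 0)
    (hdist : ∀ j k : Fin K, j ≠ k →
      {x : Euc d | (∑ i, w j i * x i) + b j = 0} ≠ {x : Euc d | (∑ i, w k i * x i) + b k = 0})
    (hinter : ∀ k, ({x : Euc d | (∑ i, w k i * x i) + b k = 0} ∩ interior X).Nonempty) :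
    (∃ z : Fin d → ℝ, (gradCov ρ f).mulVec z = v) ∧
      ∀ k, a k ≠ 0 → ∃ z : Fin d → ℝ, (gradCov ρ f).mulVec z = w k := by
  classical
  obtain ⟨hρm, hρpos, hρzero, hρint1⟩ := hρ
  set p : Fin K → Euc d → ℝ := fun k x => (∑ i, w k i * x i) + b k with hp
  set G : Euc d → Euc d := fun x => v + ∑ k, if 0 < p k x then a k • w k else 0 with hG
  have hGap : ∀ (x : Euc d) (i : Fin d),
      G x i = v i + ∑ k, if 0 < p k x then a k * w k i else 0 := by
    intro x i
    rw [hG]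
    simp only [PiLp.add_apply, PiLp.smul_apply, smul_eq_mul]
    rw [WithLp.ofLp_sum, Finset.sum_apply]
    congr 1
    apply Finset.sum_congr rfl
    intro k _
    by_cases hk : 0 < p k x <;> simp [hk]
  have hGdot : ∀ x y : Euc d, (∑ i, y i * G x i)
      = (∑ i, y i * v i) + ∑ k, (if 0 < p k x then a k * (∑ i, y i * w k i) else 0) := by
    intro x y
    simp only [hGap, mul_add, Finset.mul_sum, Finset.sum_add_distrib]
    congr 1
    rw [Finset.sum_comm]
    apply Finset.sum_congr rfl
    intro k _
    by_cases hc : 0 < p k x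
    · simp only [hc, if_true, Finset.mul_sum]
      apply Finset.sum_congr rfl; intro i _; ring
    · simp only [hc, if_false, mul_zero, Finset.sum_const_zero]
  -- the gradient of f at interior points off the hyperplanes
  have hgrad : ∀ x, x ∈ interior X → (∀ k, p k x ≠ 0) → HasGradientAt f (G x) x := by
    intro x hx hpk
    set U : Set (Euc d) := interior X ∩ ⋂ k ∈ (Finset.univ : Finset (Fin K)),
        (if 0 < p k x then {y | 0 < p k y} else {y | p k y < 0}) with hU
    have hUopen : IsOpen U := by
      apply isOpen_interior.inter (isOpen_biInter_finset fun k _ => ?_)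
      by_cases hc : 0 < p k x
      · simpa [hc] using
          isOpen_lt continuous_const (sumMul_continuous (w k) (b k))
      · simpa [hc] using
          isOpen_lt (sumMul_continuous (w k) (b k)) continuous_const
    have hxU : x ∈ U := by
      refine ⟨hx, ?_⟩
      simp only [Set.mem_iInter]
      intro k _
      by_cases hc : 0 < p k x
      · simp only [hc, if_true]; exact hc
      · simp only [hc, if_false, Set.mem_setOf_eq]
        exact lt_of_le_of_ne (not_lt.mp hc) (hpk k)
    set C : ℝ := (∑ k, if 0 < p k x then a k * b k else 0) + c with hC
    have hfa : ∀ y ∈ U, f y = (∑ i, G x i * y i) + C := by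
      intro y hy
      have hyX : y ∈ X := interior_subset hy.1
      rw [hf y hyX]
      have hsum : ∀ i, G x i * y i = y i * G x i := fun i => mul_comm _ _
      have h1 : (∑ i, G x i * y i)
          = (∑ i, y i * v i) + ∑ k, (if 0 < p k x then a k * (∑ i, y i * w k i) else 0) := by
        rw [← hGdot x y]
        apply Finset.sum_congr rfl
        intro i _; exact mul_comm _ _
      rw [h1, hC]
      have h2 : ∀ k, a k * relu ((∑ i, w k i * y i) + b k)
          = (if 0 < p k x then a k * (∑ i, y i * w k i) else 0)
            + (if 0 < p k x then a k * b k else 0) := by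
        intro k
        have hymem := hy.2
        simp only [Set.mem_iInter] at hymem
        have hyk := hymem k (Finset.mem_univ k)
        by_cases hc : 0 < p k x
        · simp only [hc, if_true] at hyk ⊢
          have hyk' : (0:ℝ) < (∑ i, w k i * y i) + b k := hyk
          rw [relu, max_eq_left hyk'.le]
          have : (∑ i, w k i * y i) = ∑ i, y i * w k i := by
            apply Finset.sum_congr rfl; intro i _; ring
          rw [this]; ring
        · simp only [hc, if_false] at hyk ⊢
          have hyk' : (∑ i, w k i * y i) + b k < 0 := hyk
          rw [relu, max_eq_right hyk'.le, mul_zero, add_zero]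
      simp only [h2, Finset.sum_add_distrib]
      have h3 : (∑ i, v i * y i) = ∑ i, y i * v i := by
        apply Finset.sum_congr rfl; intro i _; ring
      rw [h3]; ring
    have haff := affine_hasGradientAt (G x) C x
    apply haff.congr_of_eventuallyEq
    filter_upwards [hUopen.mem_nhds hxU] with y hy
    exact hfa y hy
  -- almost everywhere, either ρ vanishes or the gradient of f is G
  have hae : ∀ᵐ x, ρ x = 0 ∨ gradient f x = G x := by
    rw [ae_iff]
    have hnull : volume (frontier X ∪ ⋃ k, {x : Euc d | (∑ i, w k i * x i) + b k = 0}) = 0 :=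
      measure_union_null (hconv.addHaar_frontier volume)
        (measure_iUnion_null fun k => hyperplane_null (w k) (hw k) (b k))
    refine measure_mono_null ?_ hnull
    · intro x hx
      simp only [Set.mem_setOf_eq, not_or] at hx
      obtain ⟨hρx, hgx⟩ := hx
      have hxX : x ∈ X := by by_contra h; exact hρx (hρzero x h)
      by_cases hxint : x ∈ interior X
      · by_cases hsig : ∀ k, p k x ≠ 0
        · exact absurd ((hgrad x hxint hsig).gradient) hgx
        · push_neg at hsig
          obtain ⟨k, hk⟩ := hsig
          exact Or.inr (Set.mem_iUnion.mpr ⟨k, hk⟩)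
      · left
        exact ⟨subset_closure hxX, hxint⟩
  -- basic facts about ρ and G
  have hρ0 : ∀ x, 0 ≤ ρ x := by
    intro x
    by_cases h : x ∈ X
    · exact (hρpos x h).le
    · rw [hρzero x h]
  have hρI : Integrable ρ := by
    by_contra h
    rw [integral_undef h] at hρint1
    norm_num at hρint1
  have hpm : ∀ k, Measurable (p k) := fun k => (sumMul_continuous (w k) (b k)).measurable
  have hGm : ∀ i, Measurable fun x => G x i := by
    intro i
    simp only [hGap]
    apply Measurable.add measurable_const
    apply Finset.measurable_sum
    intro k _
    exact Measurable.ite (measurableSet_lt measurable_const (hpm k))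
      measurable_const measurable_const
  set B : Fin d → ℝ := fun i => |v i| + ∑ k, |a k * w k i| with hB
  have hGb : ∀ x i, |G x i| ≤ B i := by
    intro x i
    rw [hGap]
    refine (abs_add_le _ _).trans (add_le_add le_rfl ?_)
    refine (Finset.abs_sum_le_sum_abs _ _).trans ?_
    apply Finset.sum_le_sum
    intro k _
    by_cases hc : 0 < p k x
    · simp [hc]
    · simp [hc]; positivity
  have hintGG : ∀ i j, Integrable fun x => G x i * G x j * ρ x := by
    intro i j
    apply Integrable.mono' (g := fun x => B i * B j * ρ x) (hρI.const_mul _)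
    · exact (((hGm i).mul (hGm j)).mul hρm).aestronglyMeasurable
    · refine Filter.Eventually.of_forall fun x => ?_
      rw [Real.norm_eq_abs, abs_mul, abs_mul, abs_of_nonneg (hρ0 x)]
      apply mul_le_mul_of_nonneg_right _ (hρ0 x)
      exact mul_le_mul (hGb x i) (hGb x j) (abs_nonneg _)
        ((abs_nonneg (G x i)).trans (hGb x i))
  have hMG : ∀ i j, gradCov ρ f i j = ∫ x, G x i * G x j * ρ x := by
    intro i j
    show (∫ x, gradient f x i * gradient f x j * ρ x) = _
    apply integral_congr_ae
    filter_upwards [hae] with x hx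
    rcases hx with h | h
    · rw [h, mul_zero, mul_zero]
    · rw [h]
  -- the key consequence of M z = 0
  have key : ∀ z : Euc d, (gradCov ρ f).mulVec z = 0 →
      ∀ᵐ x, ρ x = 0 ∨ (∑ i, z i * G x i) = 0 := by
    intro z hz
    set q : Euc d → ℝ := fun x => (∑ i, z i * G x i)^2 * ρ x with hq
    have hq0 : ∀ x, 0 ≤ q x := fun x => mul_nonneg (sq_nonneg _) (hρ0 x)
    have hqexp : ∀ x, q x = ∑ i, ∑ j, (z i * z j) * (G x i * G x j * ρ x) := by
      intro x
      rw [hq]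
      show (∑ i, z i * G x i)^2 * ρ x = _
      rw [sq, Finset.sum_mul_sum, Finset.sum_mul]
      apply Finset.sum_congr rfl; intro i _
      rw [Finset.sum_mul]
      apply Finset.sum_congr rfl; intro j _; ring
    have hqint : Integrable q := by
      rw [show q = fun x => ∑ i, ∑ j, (z i * z j) * (G x i * G x j * ρ x) from
        funext hqexp]
      exact integrable_finset_sum _ fun i _ =>
        integrable_finset_sum _ fun j _ => (hintGG i j).const_mul _
    have hqzero : ∫ x, q x = 0 := by
      have h1 : ∫ x, q x = ∑ i, ∑ j, (z i * z j) * ∫ x, G x i * G x j * ρ x := by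
        simp only [hqexp]
        rw [integral_finset_sum _ (fun i _ =>
          integrable_finset_sum _ fun j _ => (hintGG i j).const_mul _)]
        apply Finset.sum_congr rfl; intro i _
        rw [integral_finset_sum _ (fun j _ => (hintGG i j).const_mul _)]
        apply Finset.sum_congr rfl; intro j _
        rw [integral_const_mul]
      rw [h1]
      have h2 : ∀ i j, (z i * z j) * ∫ x, G x i * G x j * ρ x
          = z i * (gradCov ρ f i j * z j) := by
        intro i j; rw [← hMG i j]; ring
      simp only [h2]
      have h3 : ∀ i, ∑ j, z i * (gradCov ρ f i j * z j)
          = z i * ((gradCov ρ f).mulVec z i) := by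
        intro i
        rw [← Finset.mul_sum]
        congr 1
      simp only [h3, hz, Pi.zero_apply, mul_zero, Finset.sum_const_zero]
    have := (integral_eq_zero_iff_of_nonneg hq0 hqint).mp hqzero
    filter_upwards [this] with x hx
    have hx' : (∑ i, z i * G x i)^2 * ρ x = 0 := hx
    rcases mul_eq_zero.mp hx' with h | h
    · exact Or.inr (sq_eq_zero_iff.mp h)
    · exact Or.inl h
  -- from a.e. information to pointwise information on open sets meeting interior X
  have hOpos : ∀ z : Euc d, (gradCov ρ f).mulVec z = 0 →
      ∀ V : Set (Euc d), IsOpen V → (V ∩ interior X).Nonempty →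
      ∃ x, (x ∈ V ∩ interior X) ∧ (∀ k, p k x ≠ 0) ∧ (∑ i, z i * G x i) = 0 := by
    intro z hz V hV hVX
    set bad : Set (Euc d) := {x | ¬(ρ x = 0 ∨ (∑ i, z i * G x i) = 0)}
        ∪ ⋃ k, {x : Euc d | (∑ i, w k i * x i) + b k = 0} with hbad
    have hbadnull : volume bad = 0 :=
      measure_union_null (ae_iff.mp (key z hz))
        (measure_iUnion_null fun k => hyperplane_null (w k) (hw k) (b k))
    have hpos : 0 < volume (V ∩ interior X) :=
      (hV.inter isOpen_interior).measure_pos volume hVX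
    have hne : ((V ∩ interior X) \ bad).Nonempty := by
      rw [Set.nonempty_iff_ne_empty]
      intro hcon
      have hsub : V ∩ interior X ⊆ bad := Set.diff_eq_empty.mp hcon
      exact absurd (measure_mono_null hsub hbadnull) (ne_of_gt hpos)
    obtain ⟨x, hxV, hxbad⟩ := hne
    rw [hbad] at hxbad
    simp only [Set.mem_union, Set.mem_setOf_eq, Set.mem_iUnion, not_or, not_exists,
      not_not] at hxbad
    have hxX : x ∈ X := interior_subset hxV.2
    have hρx : ρ x ≠ 0 := ne_of_gt (hρpos x hxX)
    refine ⟨x, hxV, fun k => hxbad.2 k, ?_⟩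
    tauto
  -- step 1: the weights w k (for a k ≠ 0) are orthogonal to the kernel
  have hzw : ∀ z : Euc d, (gradCov ρ f).mulVec z = 0 →
      ∀ k, a k ≠ 0 → (∑ i, z i * w k i) = 0 := by
    intro z hz k hak
    obtain ⟨p₀, hp₀X, hp₀k, hp₀j⟩ :=
      exists_point_on_one_hyperplane X w b hw hdist k (hinter k)
    set S : Set (Euc d) := interior X ∩ ⋂ j ∈ Finset.univ.erase k,
        (if 0 < p j p₀ then {x | 0 < p j x} else {x | p j x < 0}) with hS
    have hSopen : IsOpen S := by
      apply isOpen_interior.inter (isOpen_biInter_finset fun j _ => ?_)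
      by_cases hc : 0 < p j p₀
      · simpa [hc] using
          isOpen_lt continuous_const (sumMul_continuous (w j) (b j))
      · simpa [hc] using
          isOpen_lt (sumMul_continuous (w j) (b j)) continuous_const
    have hp₀S : p₀ ∈ S := by
      refine ⟨hp₀X, ?_⟩
      simp only [Set.mem_iInter]
      intro j hj
      have hjk : j ≠ k := Finset.ne_of_mem_erase hj
      by_cases hc : 0 < p j p₀
      · simp only [hc, if_true]; exact hc
      · simp only [hc, if_false, Set.mem_setOf_eq]
        exact lt_of_le_of_ne (not_lt.mp hc) (hp₀j j hjk)
    obtain ⟨ε, hεpos, hball⟩ := Metric.isOpen_iff.mp hSopen p₀ hp₀S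
    have hSksum : (0:ℝ) < ∑ i, w k i * w k i := sumMul_self_pos (hw k)
    set t : ℝ := ε / (2 * (‖w k‖ + 1)) with ht
    have htpos : 0 < t := by positivity
    have hdist' : ∀ s : ℝ, |s| ≤ t → p₀ + s • w k ∈ Metric.ball p₀ ε := by
      intro s hs
      rw [Metric.mem_ball, dist_eq_norm, add_sub_cancel_left, norm_smul,
        Real.norm_eq_abs]
      have h1 : |s| * ‖w k‖ ≤ t * ‖w k‖ :=
        mul_le_mul_of_nonneg_right hs (norm_nonneg _)
      have h2 : t * ‖w k‖ < ε := by
        rw [ht]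
        have hn : (0:ℝ) ≤ ‖w k‖ := norm_nonneg _
        have hd : (0:ℝ) < 2 * (‖w k‖ + 1) := by positivity
        rw [div_mul_eq_mul_div, div_lt_iff₀ hd]
        nlinarith
      linarith
    have hpk_pt : ∀ s : ℝ, p k (p₀ + s • w k) = s * ∑ i, w k i * w k i := by
      intro s
      show (∑ i, w k i * (p₀ + s • w k) i) + b k = _
      have h1 : ∀ i : Fin d, (p₀ + s • w k) i = p₀ i + s * w k i := by
        intro i
        simp [PiLp.add_apply, PiLp.smul_apply, smul_eq_mul]
      simp only [h1, mul_add, Finset.sum_add_distrib]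
      have h2 : (∑ i, w k i * p₀ i) + b k = 0 := hp₀k
      have h3 : ∑ i, w k i * (s * w k i) = s * ∑ i, w k i * w k i := by
        rw [Finset.mul_sum]
        apply Finset.sum_congr rfl; intro i _; ring
      rw [h3]
      linarith
    -- the two open half-ball pieces
    have hplus : p₀ + t • w k ∈ (Metric.ball p₀ ε ∩ {x | 0 < p k x}) ∩ interior X := by
      have hb := hdist' t (le_of_eq (abs_of_pos htpos))
      refine ⟨⟨hb, ?_⟩, (hball hb).1⟩
      rw [Set.mem_setOf_eq, hpk_pt]
      positivity
    have hminus : p₀ + (-t) • w k ∈ (Metric.ball p₀ ε ∩ {x | p k x < 0}) ∩ interior X := by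
      have hb := hdist' (-t) (le_of_eq (by rw [abs_neg, abs_of_pos htpos]))
      refine ⟨⟨hb, ?_⟩, (hball hb).1⟩
      rw [Set.mem_setOf_eq, hpk_pt]
      have : -t * (∑ i, w k i * w k i) < 0 := by
        apply mul_neg_of_neg_of_pos _ hSksum
        linarith
      exact this
    have hcontk : Continuous (p k) := sumMul_continuous (w k) (b k)
    have hopenP : IsOpen (Metric.ball p₀ ε ∩ {x : Euc d | 0 < p k x}) :=
      Metric.isOpen_ball.inter (isOpen_lt continuous_const hcontk)
    have hopenM : IsOpen (Metric.ball p₀ ε ∩ {x : Euc d | p k x < 0}) :=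
      Metric.isOpen_ball.inter (isOpen_lt hcontk continuous_const)
    obtain ⟨xP, hxPV, hxPsig, hxPE⟩ := hOpos z hz _ hopenP ⟨_, hplus.1, hplus.2⟩
    obtain ⟨xM, hxMV, hxMsig, hxME⟩ := hOpos z hz _ hopenM ⟨_, hminus.1, hminus.2⟩
    have hxPS : xP ∈ S := hball hxPV.1.1
    have hxMS : xM ∈ S := hball hxMV.1.1
    -- signs of the other hyperplanes agree on S
    have hsig : ∀ x, x ∈ S → ∀ j, j ≠ k → ((0 < p j x) ↔ (0 < p j p₀)) := by
      intro x hxS j hjk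
      have := hxS.2
      simp only [Set.mem_iInter] at this
      have hj := this j (Finset.mem_erase.mpr ⟨hjk, Finset.mem_univ j⟩)
      by_cases hc : 0 < p j p₀
      · simp only [hc, if_true] at hj
        exact iff_of_true hj hc
      · simp only [hc, if_false, Set.mem_setOf_eq] at hj
        exact iff_of_false (not_lt.mpr hj.le) hc
    -- rewrite the two equations
    rw [hGdot] at hxPE hxME
    rw [← Finset.sum_erase_add _ _ (Finset.mem_univ k)] at hxPE hxME
    have hsame : (∑ j ∈ Finset.univ.erase k,
          (if 0 < p j xP then a j * (∑ i, z i * w j i) else 0))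
        = ∑ j ∈ Finset.univ.erase k,
          (if 0 < p j xM then a j * (∑ i, z i * w j i) else 0) := by
      apply Finset.sum_congr rfl
      intro j hj
      have hjk : j ≠ k := Finset.ne_of_mem_erase hj
      have h1 := hsig xP hxPS j hjk
      have h2 := hsig xM hxMS j hjk
      rw [if_congr (h1.trans h2.symm) rfl rfl]
    have hkP : (0:ℝ) < p k xP := hxPV.1.2
    have hkM : ¬ (0:ℝ) < p k xM := not_lt.mpr (le_of_lt hxMV.1.2)
    rw [if_pos hkP] at hxPE
    rw [if_neg hkM] at hxME
    rw [hsame] at hxPE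
    have hak' : a k * (∑ i, z i * w k i) = 0 := by linarith
    rcases mul_eq_zero.mp hak' with h | h
    · exact absurd h hak
    · exact h
  -- step 2: v is orthogonal to the kernel
  have hzv : ∀ z : Euc d, (gradCov ρ f).mulVec z = 0 → (∑ i, z i * v i) = 0 := by
    intro z hz
    obtain ⟨x, hxV, hsig, hEx⟩ := hOpos z hz Set.univ isOpen_univ
      (by rw [Set.univ_inter]; exact hint)
    rw [hGdot] at hEx
    have hzero : (∑ j, if 0 < p j x then a j * (∑ i, z i * w j i) else 0) = 0 := by
      apply Finset.sum_eq_zero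
      intro j _
      by_cases haj : a j = 0
      · simp [haj]
      · rw [hzw z hz j haj, mul_zero]
        simp
    linarith
  -- conclusion via the symmetric-matrix range lemma
  have hsymm : ∀ i j, gradCov ρ f i j = gradCov ρ f j i := by
    intro i j
    show (∫ x, gradient f x i * gradient f x j * ρ x)
        = ∫ x, gradient f x j * gradient f x i * ρ x
    congr 1; funext x; ring
  exact ⟨symm_matrix_mem_range _ hsymm v hzv,
    fun k hak => symm_matrix_mem_range _ hsymm (w k)
      (fun z hz => hzw z hz k hak)⟩
end
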